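/- arXiv:2509.22798 — 6 statements merged into one kernel-verified Lean document; each statement's English description precedes it below -/
import Mathlib

section
/- Let φ ∈ (0,1), let W be a Bernoulli random variable with P(W = 1) = 1 − φ, independent of a pair (T₁, T₂) of ℕ-valued random variables with finite second moments and means E(T₁) = λ₁, E(T₂) = λ₂, and set (X₁, X₂) = (W·T₁, W·T₂). Then cov(X₁, X₂) = (1 − φ) cov(T₁, T₂) + φ(1 − φ) λ₁ λ₂. -/
open MeasureTheory ProbabilityTheory

/-- In the common zero-inflation bivariate model `(X₁, X₂) = (W T₁, W T₂)` with `W` Bernoulli of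
success probability `1 - φ` independent of the ℕ-valued pair `(T₁, T₂)` with finite second
moments and means `λ₁, λ₂`, the covariance satisfies
`cov(X₁, X₂) = (1-φ) cov(T₁, T₂) + φ (1-φ) λ₁ λ₂`, where `cov(U,V) = E(UV) - E(U)E(V)`. -/
theorem stmt_6 {Ω : Type*} [MeasurableSpace Ω] (μ : Measure Ω) [IsProbabilityMeasure μ]
    (φ lam₁ lam₂ : ℝ) (hφ : φ ∈ Set.Ioo (0 : ℝ) 1)
    (W T₁ T₂ : Ω → ℕ) (hWm : Measurable W) (hT₁m : Measurable T₁) (hT₂m : Measurable T₂)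
    (hW01 : ∀ ω, W ω = 0 ∨ W ω = 1)
    (hW1 : μ {ω | W ω = 1} = ENNReal.ofReal (1 - φ))
    (hT₁sq : Integrable (fun ω => ((T₁ ω : ℝ)) ^ 2) μ)
    (hT₂sq : Integrable (fun ω => ((T₂ ω : ℝ)) ^ 2) μ)
    (hmean₁ : ∫ ω, (T₁ ω : ℝ) ∂μ = lam₁)
    (hmean₂ : ∫ ω, (T₂ ω : ℝ) ∂μ = lam₂)
    (hind : IndepFun W (fun ω => (T₁ ω, T₂ ω)) μ) :
    (∫ ω, ((W ω * T₁ ω : ℕ) : ℝ) * ((W ω * T₂ ω : ℕ) : ℝ) ∂μ)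
        - (∫ ω, ((W ω * T₁ ω : ℕ) : ℝ) ∂μ) * (∫ ω, ((W ω * T₂ ω : ℕ) : ℝ) ∂μ)
      = (1 - φ) * ((∫ ω, (T₁ ω : ℝ) * (T₂ ω : ℝ) ∂μ) - lam₁ * lam₂)
          + φ * (1 - φ) * lam₁ * lam₂ := by
  obtain ⟨hφ0, hφ1⟩ := hφ
  have hA : MeasurableSet {ω | W ω = 1} := hWm (measurableSet_singleton 1)
  have hWr : ∫ ω, (W ω : ℝ) ∂μ = 1 - φ := by
    have h : (fun ω => (W ω : ℝ)) = Set.indicator {ω | W ω = 1} 1 := by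
      ext ω
      rcases hW01 ω with h | h <;> simp [Set.indicator_apply, h]
    rw [h, integral_indicator_one hA, measureReal_def, hW1, ENNReal.toReal_ofReal (by linarith)]
  have hWmr : AEStronglyMeasurable (fun ω => (W ω : ℝ)) μ :=
    (measurable_from_top.comp hWm).aestronglyMeasurable
  have hcoe : Measurable (fun n : ℕ => (n : ℝ)) := measurable_from_top
  -- independence of real-valued composites
  have hi1 : IndepFun (fun ω => (W ω : ℝ)) (fun ω => (T₁ ω : ℝ)) μ :=
    hind.comp hcoe (hcoe.comp measurable_fst)
  have hi2 : IndepFun (fun ω => (W ω : ℝ)) (fun ω => (T₂ ω : ℝ)) μ :=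
    hind.comp hcoe (hcoe.comp measurable_snd)
  have hi12 : IndepFun (fun ω => (W ω : ℝ)) (fun ω => (T₁ ω : ℝ) * (T₂ ω : ℝ)) μ :=
    hind.comp hcoe ((hcoe.comp measurable_fst).mul (hcoe.comp measurable_snd))
  have hE1 : ∫ ω, ((W ω * T₁ ω : ℕ) : ℝ) ∂μ = (1 - φ) * lam₁ := by
    have := hi1.integral_fun_mul_eq_mul_integral hWmr (hcoe.comp hT₁m).aestronglyMeasurable
    simpa [Nat.cast_mul, hWr, hmean₁] using this
  have hE2 : ∫ ω, ((W ω * T₂ ω : ℕ) : ℝ) ∂μ = (1 - φ) * lam₂ := by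
    have := hi2.integral_fun_mul_eq_mul_integral hWmr (hcoe.comp hT₂m).aestronglyMeasurable
    simpa [Nat.cast_mul, hWr, hmean₂] using this
  have hE12 : ∫ ω, ((W ω * T₁ ω : ℕ) : ℝ) * ((W ω * T₂ ω : ℕ) : ℝ) ∂μ
      = (1 - φ) * ∫ ω, (T₁ ω : ℝ) * (T₂ ω : ℝ) ∂μ := by
    have hsq : ∀ ω, ((W ω * T₁ ω : ℕ) : ℝ) * ((W ω * T₂ ω : ℕ) : ℝ)
        = (W ω : ℝ) * ((T₁ ω : ℝ) * (T₂ ω : ℝ)) := by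
      intro ω
      rcases hW01 ω with h | h <;> simp [h] <;> ring
    rw [show (fun ω => ((W ω * T₁ ω : ℕ) : ℝ) * ((W ω * T₂ ω : ℕ) : ℝ))
        = fun ω => (W ω : ℝ) * ((T₁ ω : ℝ) * (T₂ ω : ℝ)) from funext hsq]
    rw [hi12.integral_fun_mul_eq_mul_integral hWmr
      (((hcoe.comp hT₁m).mul (hcoe.comp hT₂m)).aestronglyMeasurable), hWr]
  rw [hE1, hE2, hE12]
  ring
end

section
/- Let φ ∈ (0,1) and λ₁, λ₂ > 0. Let W be a Bernoulli random variable with P(W = 1) = 1 − φ, independent of a pair (T₁, T₂) of random variables with finite second moments such that T₁ ~ Poisson(λ₁) and T₂ ~ Poisson(λ₂) marginally, and set (X₁, X₂) = (W·T₁, W·T₂). Then corr(X₁, X₂) = corr(T₁, T₂) / √((1 + φλ₁)(1 + φλ₂)) + φλ₁λ₂ / √((1 + φλ₁)(1 + φλ₂) λ₁ λ₂). -/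
open MeasureTheory ProbabilityTheory

lemma exp_series (lam : ℝ) : ∑' k : ℕ, lam ^ k / (Nat.factorial k : ℝ) = Real.exp lam := by
  rw [Real.exp_eq_exp_ℝ, NormedSpace.exp_eq_tsum_div]

lemma shift1 (lam : ℝ) (k : ℕ) :
    ((k+1 : ℕ) : ℝ) * lam ^ (k+1) / (Nat.factorial (k+1) : ℝ)
      = lam * (lam ^ k / (Nat.factorial k : ℝ)) := by
  have hk : ((Nat.factorial k : ℝ)) ≠ 0 := Nat.cast_ne_zero.mpr k.factorial_ne_zero
  rw [Nat.factorial_succ]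
  push_cast
  field_simp
  ring

lemma sum1 (lam : ℝ) :
    Summable (fun k : ℕ => (k : ℝ) * lam ^ k / (Nat.factorial k : ℝ)) ∧
    ∑' k : ℕ, (k : ℝ) * lam ^ k / (Nat.factorial k : ℝ) = lam * Real.exp lam := by
  have hsh : (fun k : ℕ => ((k+1 : ℕ) : ℝ) * lam ^ (k+1) / (Nat.factorial (k+1) : ℝ))
      = fun k : ℕ => lam * (lam ^ k / (Nat.factorial k : ℝ)) := funext (shift1 lam)
  have hs' : Summable (fun k : ℕ => ((k+1 : ℕ) : ℝ) * lam ^ (k+1) / (Nat.factorial (k+1) : ℝ)) := by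
    rw [hsh]; exact (Real.summable_pow_div_factorial lam).mul_left lam
  have hs : Summable (fun k : ℕ => (k : ℝ) * lam ^ k / (Nat.factorial k : ℝ)) :=
    (summable_nat_add_iff 1).mp hs'
  refine ⟨hs, ?_⟩
  rw [Summable.tsum_eq_zero_add hs]
  simp only [Nat.cast_zero, zero_mul, zero_div, zero_add]
  simp only [shift1]
  rw [tsum_mul_left, exp_series]

lemma shift2 (lam : ℝ) (k : ℕ) :
    ((k+1 : ℕ) : ℝ)^2 * lam ^ (k+1) / (Nat.factorial (k+1) : ℝ)
      = lam * ((k : ℝ) * lam ^ k / (Nat.factorial k : ℝ)) + lam * (lam ^ k / (Nat.factorial k : ℝ)) := by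
  have hk : ((Nat.factorial k : ℝ)) ≠ 0 := Nat.cast_ne_zero.mpr k.factorial_ne_zero
  rw [Nat.factorial_succ]
  push_cast
  field_simp
  ring

lemma sum2 (lam : ℝ) :
    Summable (fun k : ℕ => (k : ℝ)^2 * lam ^ k / (Nat.factorial k : ℝ)) ∧
    ∑' k : ℕ, (k : ℝ)^2 * lam ^ k / (Nat.factorial k : ℝ) = (lam + lam^2) * Real.exp lam := by
  obtain ⟨hs1, ht1⟩ := sum1 lam
  have hs' : Summable (fun k : ℕ => ((k+1 : ℕ) : ℝ)^2 * lam ^ (k+1) / (Nat.factorial (k+1) : ℝ)) := by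
    have := (hs1.mul_left lam).add ((Real.summable_pow_div_factorial lam).mul_left lam)
    refine this.congr fun k => ?_
    exact (shift2 lam k).symm
  have hs : Summable (fun k : ℕ => (k : ℝ)^2 * lam ^ k / (Nat.factorial k : ℝ)) :=
    (summable_nat_add_iff 1).mp hs'
  refine ⟨hs, ?_⟩
  rw [Summable.tsum_eq_zero_add hs]
  simp only [Nat.cast_zero, zero_pow, zero_mul, zero_div, zero_add, shift2]
  rw [Summable.tsum_add (hs1.mul_left lam) ((Real.summable_pow_div_factorial lam).mul_left lam),
    tsum_mul_left, tsum_mul_left, ht1, exp_series]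
  ring

lemma integral_comp_nat {Ω : Type*} [MeasurableSpace Ω] (μ : Measure Ω)
    (T : Ω → ℕ) (hTm : Measurable T) (p : ℕ → ℝ) (hp : ∀ k, 0 ≤ p k)
    (hT : ∀ k : ℕ, μ {ω | T ω = k} = ENNReal.ofReal (p k))
    (f : ℕ → ℝ) (hf : ∀ k, 0 ≤ f k) (hs : Summable (fun k => f k * p k)) :
    Integrable (fun ω => f (T ω)) μ ∧ ∫ ω, f (T ω) ∂μ = ∑' k, f k * p k := by
  have hnn : 0 ≤ᵐ[μ] fun ω => f (T ω) := Filter.Eventually.of_forall fun ω => hf _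
  have hmeas : Measurable fun ω => f (T ω) := measurable_from_nat.comp hTm
  have hlin : ∫⁻ ω, ENNReal.ofReal (f (T ω)) ∂μ = ENNReal.ofReal (∑' k, f k * p k) := by
    have h1 : ∫⁻ ω, ENNReal.ofReal (f (T ω)) ∂μ
        = ∫⁻ k, ENNReal.ofReal (f k) ∂(μ.map T) :=
      (lintegral_map (f := fun k : ℕ => ENNReal.ofReal (f k)) measurable_from_nat hTm).symm
    rw [h1, lintegral_countable']
    have hmk : ∀ k : ℕ, (μ.map T) {k} = ENNReal.ofReal (p k) := by
      intro k
      rw [Measure.map_apply hTm (measurableSet_singleton k)]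
      exact hT k
    calc ∑' k : ℕ, ENNReal.ofReal (f k) * (μ.map T) {k}
        = ∑' k : ℕ, ENNReal.ofReal (f k * p k) := by
          refine tsum_congr fun k => ?_
          rw [hmk k, ← ENNReal.ofReal_mul (hf k)]
      _ = ENNReal.ofReal (∑' k, f k * p k) :=
          (ENNReal.ofReal_tsum_of_nonneg (fun k => mul_nonneg (hf k) (hp k)) hs).symm
  have hint : Integrable (fun ω => f (T ω)) μ := by
    refine ⟨hmeas.aestronglyMeasurable, ?_⟩
    rw [hasFiniteIntegral_iff_ofReal hnn, hlin]
    exact ENNReal.ofReal_lt_top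
  refine ⟨hint, ?_⟩
  rw [integral_eq_lintegral_of_nonneg_ae hnn hmeas.aestronglyMeasurable, hlin,
    ENNReal.toReal_ofReal (tsum_nonneg fun k => mul_nonneg (hf k) (hp k))]

lemma poisson_moments {Ω : Type*} [MeasurableSpace Ω] (μ : Measure Ω)
    (lam : ℝ) (hlam : 0 < lam) (T : Ω → ℕ) (hTm : Measurable T)
    (hT : ∀ k : ℕ, μ {ω | T ω = k}
      = ENNReal.ofReal (Real.exp (-lam) * lam ^ k / Nat.factorial k)) :
    (∫ ω, (T ω : ℝ) ∂μ = lam) ∧ (∫ ω, (T ω : ℝ)^2 ∂μ = lam + lam^2) ∧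
    Integrable (fun ω => (T ω : ℝ)) μ ∧ Integrable (fun ω => (T ω : ℝ)^2) μ := by
  set p : ℕ → ℝ := fun k => Real.exp (-lam) * lam ^ k / Nat.factorial k with hpdef
  have hp : ∀ k, 0 ≤ p k := fun k => by
    positivity
  have hexp : Real.exp (-lam) * Real.exp lam = 1 := by
    rw [← Real.exp_add]; simp
  obtain ⟨hs1, ht1⟩ := sum1 lam
  obtain ⟨hs2, ht2⟩ := sum2 lam
  -- first moment
  have key1 : ∀ k : ℕ, (k : ℝ) * p k = Real.exp (-lam) * ((k : ℝ) * lam ^ k / Nat.factorial k) := by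
    intro k; simp only [hpdef]; ring
  have hS1 : Summable (fun k : ℕ => (k : ℝ) * p k) := by
    refine (hs1.mul_left (Real.exp (-lam))).congr fun k => (key1 k).symm
  have hT1 : ∑' k : ℕ, (k : ℝ) * p k = lam := by
    calc ∑' k : ℕ, (k : ℝ) * p k
        = Real.exp (-lam) * ∑' k : ℕ, (k : ℝ) * lam ^ k / Nat.factorial k := by
          rw [← tsum_mul_left]; exact tsum_congr key1
      _ = lam := by rw [ht1, ← mul_assoc, mul_comm (Real.exp (-lam)) lam, mul_assoc, hexp, mul_one]
  have key2 : ∀ k : ℕ, (k : ℝ)^2 * p k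
      = Real.exp (-lam) * ((k : ℝ)^2 * lam ^ k / Nat.factorial k) := by
    intro k; simp only [hpdef]; ring
  have hS2 : Summable (fun k : ℕ => (k : ℝ)^2 * p k) :=
    (hs2.mul_left (Real.exp (-lam))).congr fun k => (key2 k).symm
  have hT2 : ∑' k : ℕ, (k : ℝ)^2 * p k = lam + lam^2 := by
    calc ∑' k : ℕ, (k : ℝ)^2 * p k
        = Real.exp (-lam) * ∑' k : ℕ, (k : ℝ)^2 * lam ^ k / Nat.factorial k := by
          rw [← tsum_mul_left]; exact tsum_congr key2
      _ = lam + lam^2 := by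
          rw [ht2, ← mul_assoc, mul_comm (Real.exp (-lam)) (lam + lam^2), mul_assoc, hexp, mul_one]
  obtain ⟨hi1, he1⟩ := integral_comp_nat μ T hTm p hp hT (fun k => (k : ℝ))
    (fun k => Nat.cast_nonneg k) hS1
  obtain ⟨hi2, he2⟩ := integral_comp_nat μ T hTm p hp hT (fun k => (k : ℝ)^2)
    (fun k => sq_nonneg _) hS2
  exact ⟨he1.trans hT1, he2.trans hT2, hi1, hi2⟩

/-- In the common zero-inflation bivariate model `(X₁, X₂) = (W T₁, W T₂)`, where `W` is
Bernoulli with success probability `1 - φ`, independent of a pair `(T₁, T₂)` with Poisson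
margins of rates `λ₁, λ₂`, the correlation satisfies
`corr(X₁,X₂) = corr(T₁,T₂)/√((1+φλ₁)(1+φλ₂)) + φλ₁λ₂/√((1+φλ₁)(1+φλ₂)λ₁λ₂)`,
where `corr(U,V) = cov(U,V)/√(var(U) var(V))` and `cov(U,V) = E(UV) - E(U)E(V)`. -/
theorem stmt_7 {Ω : Type*} [MeasurableSpace Ω] (μ : Measure Ω) [IsProbabilityMeasure μ]
    (φ lam₁ lam₂ : ℝ) (hφ : φ ∈ Set.Ioo (0 : ℝ) 1) (hlam₁ : 0 < lam₁) (hlam₂ : 0 < lam₂)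
    (W T₁ T₂ : Ω → ℕ) (hWm : Measurable W) (hT₁m : Measurable T₁) (hT₂m : Measurable T₂)
    (hW01 : ∀ ω, W ω = 0 ∨ W ω = 1)
    (hW1 : μ {ω | W ω = 1} = ENNReal.ofReal (1 - φ))
    (hT₁ : ∀ k : ℕ,
      μ {ω | T₁ ω = k} = ENNReal.ofReal (Real.exp (-lam₁) * lam₁ ^ k / Nat.factorial k))
    (hT₂ : ∀ k : ℕ,
      μ {ω | T₂ ω = k} = ENNReal.ofReal (Real.exp (-lam₂) * lam₂ ^ k / Nat.factorial k))
    (hind : IndepFun W (fun ω => (T₁ ω, T₂ ω)) μ) :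
    ((∫ ω, ((W ω * T₁ ω : ℕ) : ℝ) * ((W ω * T₂ ω : ℕ) : ℝ) ∂μ)
        - (∫ ω, ((W ω * T₁ ω : ℕ) : ℝ) ∂μ) * (∫ ω, ((W ω * T₂ ω : ℕ) : ℝ) ∂μ))
      / Real.sqrt (variance (fun ω => ((W ω * T₁ ω : ℕ) : ℝ)) μ
          * variance (fun ω => ((W ω * T₂ ω : ℕ) : ℝ)) μ)
    = ((∫ ω, (T₁ ω : ℝ) * (T₂ ω : ℝ) ∂μ)
          - (∫ ω, (T₁ ω : ℝ) ∂μ) * (∫ ω, (T₂ ω : ℝ) ∂μ))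
        / Real.sqrt (variance (fun ω => (T₁ ω : ℝ)) μ * variance (fun ω => (T₂ ω : ℝ)) μ)
        / Real.sqrt ((1 + φ * lam₁) * (1 + φ * lam₂))
      + φ * lam₁ * lam₂ / Real.sqrt ((1 + φ * lam₁) * (1 + φ * lam₂) * lam₁ * lam₂) := by
  obtain ⟨hφ0, hφ1⟩ := hφ
  have h1φ : (0:ℝ) < 1 - φ := by linarith
  obtain ⟨hm₁, hm₁sq, hi₁, hi₁sq⟩ := poisson_moments μ lam₁ hlam₁ T₁ hT₁m hT₁
  obtain ⟨hm₂, hm₂sq, hi₂, hi₂sq⟩ := poisson_moments μ lam₂ hlam₂ T₂ hT₂m hT₂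
  have hWrm : Measurable (fun ω => (W ω : ℝ)) := measurable_from_nat.comp hWm
  -- integral of W
  have hWint : ∫ ω, (W ω : ℝ) ∂μ = 1 - φ := by
    have hset : MeasurableSet {ω | W ω = 1} := hWm (measurableSet_singleton 1)
    have heq : (fun ω => (W ω : ℝ)) = Set.indicator {ω | W ω = 1} (fun _ => (1:ℝ)) := by
      funext ω
      rcases hW01 ω with h | h <;>
        simp [h, Set.indicator_apply, Set.mem_setOf_eq]
    rw [heq, integral_indicator_const _ hset, measureReal_def, hW1,
      ENNReal.toReal_ofReal h1φ.le, smul_eq_mul, mul_one]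
  -- generic independence identity
  have hgen : ∀ g : ℕ × ℕ → ℝ, (∀ q, 0 ≤ g q) →
      ∫ ω, (W ω : ℝ) * g (T₁ ω, T₂ ω) ∂μ = (1 - φ) * ∫ ω, g (T₁ ω, T₂ ω) ∂μ := by
    intro g hg
    have hgm : Measurable (fun ω => g (T₁ ω, T₂ ω)) :=
      (measurable_of_countable g).comp (hT₁m.prodMk hT₂m)
    have hindr : IndepFun (fun ω => (W ω : ℝ)) (fun ω => g (T₁ ω, T₂ ω)) μ :=
      hind.comp measurable_from_nat (measurable_of_countable g)
    have := hindr.integral_fun_mul_eq_mul_integral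
      hWrm.aestronglyMeasurable hgm.aestronglyMeasurable
    rw [← hWint]
    exact this
  -- rewrite the five integrals
  have hI12 : (∫ ω, ((W ω * T₁ ω : ℕ) : ℝ) * ((W ω * T₂ ω : ℕ) : ℝ) ∂μ)
      = (1 - φ) * ∫ ω, (T₁ ω : ℝ) * (T₂ ω : ℝ) ∂μ := by
    have h := hgen (fun q => (q.1 : ℝ) * (q.2 : ℝ)) (fun q => by positivity)
    have heq : (fun ω => ((W ω * T₁ ω : ℕ) : ℝ) * ((W ω * T₂ ω : ℕ) : ℝ))
        = fun ω => (W ω : ℝ) * ((T₁ ω : ℝ) * (T₂ ω : ℝ)) := by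
      funext ω
      rcases hW01 ω with hw | hw <;> simp [hw]
    rw [show (∫ ω, ((W ω * T₁ ω : ℕ) : ℝ) * ((W ω * T₂ ω : ℕ) : ℝ) ∂μ)
        = ∫ ω, (W ω : ℝ) * ((T₁ ω : ℝ) * (T₂ ω : ℝ)) ∂μ from congrArg (integral μ) heq]
    exact h
  have hI1 : (∫ ω, ((W ω * T₁ ω : ℕ) : ℝ) ∂μ) = (1 - φ) * lam₁ := by
    have h := hgen (fun q => (q.1 : ℝ)) (fun q => by positivity)
    have heq : (fun ω => ((W ω * T₁ ω : ℕ) : ℝ)) = fun ω => (W ω : ℝ) * (T₁ ω : ℝ) := by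
      funext ω; push_cast; ring
    rw [show (∫ ω, ((W ω * T₁ ω : ℕ) : ℝ) ∂μ)
        = ∫ ω, (W ω : ℝ) * (T₁ ω : ℝ) ∂μ from congrArg (integral μ) heq]
    rw [h, hm₁]
  have hI2 : (∫ ω, ((W ω * T₂ ω : ℕ) : ℝ) ∂μ) = (1 - φ) * lam₂ := by
    have h := hgen (fun q => (q.2 : ℝ)) (fun q => by positivity)
    have heq : (fun ω => ((W ω * T₂ ω : ℕ) : ℝ)) = fun ω => (W ω : ℝ) * (T₂ ω : ℝ) := by
      funext ω; push_cast; ring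
    rw [show (∫ ω, ((W ω * T₂ ω : ℕ) : ℝ) ∂μ)
        = ∫ ω, (W ω : ℝ) * (T₂ ω : ℝ) ∂μ from congrArg (integral μ) heq]
    rw [h, hm₂]
  -- Memℒp facts
  have hL2T₁ : MemLp (fun ω => (T₁ ω : ℝ)) 2 μ := by
    refine (memLp_two_iff_integrable_sq
      ((measurable_from_nat.comp hT₁m : Measurable fun ω => (T₁ ω : ℝ)).aestronglyMeasurable)).mpr ?_
    exact hi₁sq
  have hL2T₂ : MemLp (fun ω => (T₂ ω : ℝ)) 2 μ := by
    refine (memLp_two_iff_integrable_sq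
      ((measurable_from_nat.comp hT₂m : Measurable fun ω => (T₂ ω : ℝ)).aestronglyMeasurable)).mpr ?_
    exact hi₂sq
  have hL2X₁ : MemLp (fun ω => ((W ω * T₁ ω : ℕ) : ℝ)) 2 μ := by
    refine hL2T₁.of_le ((measurable_from_nat.comp (hWm.mul hT₁m) :
      Measurable fun ω => ((W ω * T₁ ω : ℕ) : ℝ)).aestronglyMeasurable) ?_
    filter_upwards with ω
    rcases hW01 ω with hw | hw <;> simp [hw, Real.norm_eq_abs, abs_of_nonneg]
  have hL2X₂ : MemLp (fun ω => ((W ω * T₂ ω : ℕ) : ℝ)) 2 μ := by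
    refine hL2T₂.of_le ((measurable_from_nat.comp (hWm.mul hT₂m) :
      Measurable fun ω => ((W ω * T₂ ω : ℕ) : ℝ)).aestronglyMeasurable) ?_
    filter_upwards with ω
    rcases hW01 ω with hw | hw <;> simp [hw, Real.norm_eq_abs, abs_of_nonneg]
  -- variances
  have hvT₁ : variance (fun ω => (T₁ ω : ℝ)) μ = lam₁ := by
    rw [variance_eq_sub hL2T₁]
    simp only [Pi.pow_apply]
    rw [hm₁sq, hm₁]; ring
  have hvT₂ : variance (fun ω => (T₂ ω : ℝ)) μ = lam₂ := by
    rw [variance_eq_sub hL2T₂]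
    simp only [Pi.pow_apply]
    rw [hm₂sq, hm₂]; ring
  have hX₁sq : (∫ ω, ((W ω * T₁ ω : ℕ) : ℝ)^2 ∂μ) = (1 - φ) * (lam₁ + lam₁^2) := by
    have h := hgen (fun q => (q.1 : ℝ)^2) (fun q => by positivity)
    have heq : (fun ω => ((W ω * T₁ ω : ℕ) : ℝ)^2) = fun ω => (W ω : ℝ) * (T₁ ω : ℝ)^2 := by
      funext ω
      rcases hW01 ω with hw | hw <;> simp [hw]
    rw [show (∫ ω, ((W ω * T₁ ω : ℕ) : ℝ)^2 ∂μ)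
        = ∫ ω, (W ω : ℝ) * (T₁ ω : ℝ)^2 ∂μ from congrArg (integral μ) heq]
    rw [h, hm₁sq]
  have hX₂sq : (∫ ω, ((W ω * T₂ ω : ℕ) : ℝ)^2 ∂μ) = (1 - φ) * (lam₂ + lam₂^2) := by
    have h := hgen (fun q => (q.2 : ℝ)^2) (fun q => by positivity)
    have heq : (fun ω => ((W ω * T₂ ω : ℕ) : ℝ)^2) = fun ω => (W ω : ℝ) * (T₂ ω : ℝ)^2 := by
      funext ω
      rcases hW01 ω with hw | hw <;> simp [hw]
    rw [show (∫ ω, ((W ω * T₂ ω : ℕ) : ℝ)^2 ∂μ)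
        = ∫ ω, (W ω : ℝ) * (T₂ ω : ℝ)^2 ∂μ from congrArg (integral μ) heq]
    rw [h, hm₂sq]
  have hvX₁ : variance (fun ω => ((W ω * T₁ ω : ℕ) : ℝ)) μ = (1-φ) * lam₁ * (1 + φ*lam₁) := by
    rw [variance_eq_sub hL2X₁]
    simp only [Pi.pow_apply]
    rw [hX₁sq, hI1]; ring
  have hvX₂ : variance (fun ω => ((W ω * T₂ ω : ℕ) : ℝ)) μ = (1-φ) * lam₂ * (1 + φ*lam₂) := by
    rw [variance_eq_sub hL2X₂]
    simp only [Pi.pow_apply]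
    rw [hX₂sq, hI2]; ring
  rw [hI12, hI1, hI2, hvX₁, hvX₂, hvT₁, hvT₂, hm₁, hm₂]
  -- algebra with square roots
  set E := ∫ ω, (T₁ ω : ℝ) * (T₂ ω : ℝ) ∂μ with hE
  have hs1 : Real.sqrt lam₁ ^ 2 = lam₁ := Real.sq_sqrt hlam₁.le
  have hs2 : Real.sqrt lam₂ ^ 2 = lam₂ := Real.sq_sqrt hlam₂.le
  have hu1' : (0:ℝ) < 1 + φ * lam₁ := by nlinarith
  have hu2' : (0:ℝ) < 1 + φ * lam₂ := by nlinarith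
  have hu1 : Real.sqrt (1 + φ * lam₁) ^ 2 = 1 + φ * lam₁ := Real.sq_sqrt hu1'.le
  have hu2 : Real.sqrt (1 + φ * lam₂) ^ 2 = 1 + φ * lam₂ := Real.sq_sqrt hu2'.le
  set s1 := Real.sqrt lam₁
  set s2 := Real.sqrt lam₂
  set u1 := Real.sqrt (1 + φ * lam₁)
  set u2 := Real.sqrt (1 + φ * lam₂)
  have hs1p : 0 < s1 := Real.sqrt_pos.mpr hlam₁
  have hs2p : 0 < s2 := Real.sqrt_pos.mpr hlam₂
  have hu1p : 0 < u1 := Real.sqrt_pos.mpr hu1'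
  have hu2p : 0 < u2 := Real.sqrt_pos.mpr hu2'
  have hA : Real.sqrt ((1-φ) * lam₁ * (1 + φ*lam₁) * ((1-φ) * lam₂ * (1 + φ*lam₂)))
      = (1-φ) * s1 * u1 * s2 * u2 := by
    rw [show (1-φ) * lam₁ * (1 + φ*lam₁) * ((1-φ) * lam₂ * (1 + φ*lam₂))
        = ((1-φ) * s1 * u1 * s2 * u2)^2 by rw [← hu1, ← hu2, ← hs1, ← hs2]; ring]
    exact Real.sqrt_sq (by positivity)
  have hB : Real.sqrt (lam₁ * lam₂) = s1 * s2 := by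
    rw [show lam₁ * lam₂ = (s1 * s2)^2 by rw [← hs1, ← hs2]; ring]
    exact Real.sqrt_sq (by positivity)
  have hC : Real.sqrt ((1 + φ*lam₁) * (1 + φ*lam₂)) = u1 * u2 := by
    rw [show (1 + φ*lam₁) * (1 + φ*lam₂) = (u1 * u2)^2 by rw [← hu1, ← hu2]; ring]
    exact Real.sqrt_sq (by positivity)
  have hD : Real.sqrt ((1 + φ*lam₁) * (1 + φ*lam₂) * lam₁ * lam₂) = u1 * u2 * s1 * s2 := by
    rw [show (1 + φ*lam₁) * (1 + φ*lam₂) * lam₁ * lam₂ = (u1 * u2 * s1 * s2)^2 by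
      rw [← hu1, ← hu2, ← hs1, ← hs2]; ring]
    exact Real.sqrt_sq (by positivity)
  rw [hA, hB, hC, hD]
  rw [show lam₁ = s1^2 from hs1.symm, show lam₂ = s2^2 from hs2.symm]
  field_simp
  ring
end

section
/- Let φ ∈ (0,1) and λ₁, λ₂ > 0. Let W be a Bernoulli random variable with P(W = 1) = 1 − φ, and let T₁ ~ Poisson(λ₁) and T₂ ~ Poisson(λ₂) be such that W, T₁, T₂ are mutually independent. Set (X₁, X₂) = (W·T₁, W·T₂). Then corr(X₁, X₂) = φ √( λ₁ λ₂ / ((1 + φλ₁)(1 + φλ₂)) ). -/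
open MeasureTheory ProbabilityTheory

lemma hasSum_exp_div (lam : ℝ) : HasSum (fun k : ℕ => lam ^ k / k.factorial) (Real.exp lam) := by
  rw [Real.exp_eq_exp_ℝ]; exact NormedSpace.expSeries_div_hasSum_exp lam

lemma hasSum_pois_one (lam : ℝ) :
    HasSum (fun k : ℕ => Real.exp (-lam) * lam ^ k / k.factorial) 1 := by
  have h := (hasSum_exp_div lam).mul_left (Real.exp (-lam))
  have : Real.exp (-lam) * Real.exp lam = 1 := by
    rw [← Real.exp_add]; simp
  simpa [mul_div_assoc, this] using h

lemma hasSum_pois_mean (lam : ℝ) :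
    HasSum (fun k : ℕ => (k : ℝ) * (Real.exp (-lam) * lam ^ k / k.factorial)) lam := by
  set g : ℕ → ℝ := fun k => (k : ℝ) * (Real.exp (-lam) * lam ^ k / k.factorial) with hg
  have h1 : HasSum (fun n : ℕ => g (n + 1)) (lam - ∑ i ∈ Finset.range 1, g i) := by
    have h := (hasSum_pois_one lam).mul_left lam
    have he : (fun n : ℕ => g (n + 1)) =
        fun n : ℕ => lam * (Real.exp (-lam) * lam ^ n / n.factorial) := by
      funext n
      simp only [hg, Nat.factorial_succ, pow_succ]
      push_cast
      field_simp
    rw [he]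
    simpa [hg] using h
  exact (hasSum_nat_add_iff' 1).mp h1

lemma hasSum_pois_sq (lam : ℝ) :
    HasSum (fun k : ℕ => (k : ℝ) ^ 2 * (Real.exp (-lam) * lam ^ k / k.factorial))
      (lam + lam ^ 2) := by
  set g : ℕ → ℝ := fun k => (k : ℝ) * ((k : ℝ) - 1) * (Real.exp (-lam) * lam ^ k / k.factorial)
    with hg
  have h2 : HasSum g (lam ^ 2) := by
    have h1 : HasSum (fun n : ℕ => g (n + 2)) (lam ^ 2 - ∑ i ∈ Finset.range 2, g i) := by
      have h := (hasSum_pois_one lam).mul_left (lam ^ 2)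
      have he : (fun n : ℕ => g (n + 2)) =
          fun n : ℕ => lam ^ 2 * (Real.exp (-lam) * lam ^ n / n.factorial) := by
        funext n
        simp only [hg, Nat.factorial_succ, pow_succ]
        push_cast
        field_simp
        ring
      rw [he]
      simpa [hg, Finset.sum_range_succ] using h
    exact (hasSum_nat_add_iff' 2).mp h1
  have := h2.add (hasSum_pois_mean lam)
  have he : (fun k : ℕ => g k + (k : ℝ) * (Real.exp (-lam) * lam ^ k / k.factorial)) =
      fun k : ℕ => (k : ℝ) ^ 2 * (Real.exp (-lam) * lam ^ k / k.factorial) := by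
    funext k; simp only [hg]; ring
  rw [he] at this
  simpa [add_comm] using this

lemma nat_rv_integral {Ω : Type*} [MeasurableSpace Ω] (μ : Measure Ω) [IsProbabilityMeasure μ]
    (T : Ω → ℕ) (hTm : Measurable T) (p : ℕ → ℝ) (hp : ∀ k, 0 ≤ p k)
    (hT : ∀ k, μ {ω | T ω = k} = ENNReal.ofReal (p k))
    (f : ℕ → ℝ) (hf : ∀ k, 0 ≤ f k) {s : ℝ} (hs : HasSum (fun k => f k * p k) s) :
    Integrable (fun ω => f (T ω)) μ ∧ ∫ ω, f (T ω) ∂μ = s := by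
  set ν := Measure.map T μ with hνdef
  have hν : ∀ k, ν {k} = ENNReal.ofReal (p k) := fun k => by
    rw [hνdef, Measure.map_apply hTm (measurableSet_singleton k)]
    exact hT k
  have hfint : Integrable f ν := by
    refine ⟨(measurable_from_nat (f := f)).aestronglyMeasurable, ?_⟩
    rw [HasFiniteIntegral, lintegral_countable']
    have : ∀ k : ℕ, ‖f k‖ₑ * ν {k} = ENNReal.ofReal (f k * p k) := by
      intro k
      rw [hν k, Real.enorm_eq_ofReal (hf k), ← ENNReal.ofReal_mul (hf k)]
    simp_rw [this]
    rw [← ENNReal.ofReal_tsum_of_nonneg (fun k => mul_nonneg (hf k) (hp k)) hs.summable]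
    exact ENNReal.ofReal_lt_top
  have hcomp : Integrable (fun ω => f (T ω)) μ := by
    have := (integrable_map_measure (measurable_from_nat (f := f)).aestronglyMeasurable
      hTm.aemeasurable).mp hfint
    exact this
  refine ⟨hcomp, ?_⟩
  have h1 : ∫ ω, f (T ω) ∂μ = ∫ k, f k ∂ν := by
    rw [hνdef, integral_map hTm.aemeasurable (measurable_from_nat (f := f)).aestronglyMeasurable]
  rw [h1, integral_countable' hfint]
  have : ∀ k : ℕ, ν.real {k} • f k = f k * p k := fun k => by
    rw [measureReal_def, hν k, ENNReal.toReal_ofReal (hp k), smul_eq_mul, mul_comm]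
  simp_rw [this]
  exact hs.tsum_eq

lemma final_arith (φ l₁ l₂ : ℝ) (h0 : 0 < φ) (h1 : φ < 1) (hl₁ : 0 < l₁) (hl₂ : 0 < l₂) :
    ((1-φ)*(l₁*l₂) - ((1-φ)*l₁)*((1-φ)*l₂)) /
      Real.sqrt (((1-φ)*(l₁+l₁^2) - ((1-φ)*l₁)^2) * ((1-φ)*(l₂+l₂^2) - ((1-φ)*l₂)^2))
    = φ * Real.sqrt (l₁*l₂/((1+φ*l₁)*(1+φ*l₂))) := by
  have hp : (0:ℝ) < 1 - φ := by linarith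
  have hll : (0:ℝ) ≤ l₁ * l₂ := by positivity
  rw [show ((1-φ)*(l₁+l₁^2) - ((1-φ)*l₁)^2) * ((1-φ)*(l₂+l₂^2) - ((1-φ)*l₂)^2)
      = (1-φ)^2 * ((l₁*l₂)*((1+φ*l₁)*(1+φ*l₂))) by ring]
  rw [show (1-φ)*(l₁*l₂) - ((1-φ)*l₁)*((1-φ)*l₂) = (1-φ)*(φ*(l₁*l₂)) by ring]
  rw [Real.sqrt_mul (sq_nonneg (1-φ)), Real.sqrt_sq hp.le,
    mul_div_mul_left _ _ (ne_of_gt hp)]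
  rw [Real.sqrt_mul hll, Real.sqrt_div hll, mul_div_assoc]
  congr 1
  rw [← div_div, Real.div_sqrt]

/-- In the common zero-inflation bivariate model with independent counts,
`(X₁, X₂) = (W T₁, W T₂)` with `W ~ Bernoulli(1-φ)`, `T₁ ~ Poisson(λ₁)`, `T₂ ~ Poisson(λ₂)`
mutually independent, one has `corr(X₁, X₂) = φ √(λ₁ λ₂ / ((1+φλ₁)(1+φλ₂)))`, where
`corr(U,V) = cov(U,V)/√(var(U) var(V))` and `cov(U,V) = E(UV) - E(U)E(V)`.
Mutual independence of `W, T₁, T₂` is expressed by the equivalent sequential conditions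
`W ⟂ (T₁, T₂)` and `T₁ ⟂ T₂`. -/
theorem stmt_8 {Ω : Type*} [MeasurableSpace Ω] (μ : Measure Ω) [IsProbabilityMeasure μ]
    (φ lam₁ lam₂ : ℝ) (hφ : φ ∈ Set.Ioo (0 : ℝ) 1) (hlam₁ : 0 < lam₁) (hlam₂ : 0 < lam₂)
    (W T₁ T₂ : Ω → ℕ) (hWm : Measurable W) (hT₁m : Measurable T₁) (hT₂m : Measurable T₂)
    (hW01 : ∀ ω, W ω = 0 ∨ W ω = 1)
    (hW1 : μ {ω | W ω = 1} = ENNReal.ofReal (1 - φ))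
    (hT₁ : ∀ k : ℕ,
      μ {ω | T₁ ω = k} = ENNReal.ofReal (Real.exp (-lam₁) * lam₁ ^ k / Nat.factorial k))
    (hT₂ : ∀ k : ℕ,
      μ {ω | T₂ ω = k} = ENNReal.ofReal (Real.exp (-lam₂) * lam₂ ^ k / Nat.factorial k))
    (hind₁ : IndepFun W (fun ω => (T₁ ω, T₂ ω)) μ)
    (hind₂ : IndepFun T₁ T₂ μ) :
    ((∫ ω, ((W ω * T₁ ω : ℕ) : ℝ) * ((W ω * T₂ ω : ℕ) : ℝ) ∂μ)
        - (∫ ω, ((W ω * T₁ ω : ℕ) : ℝ) ∂μ) * (∫ ω, ((W ω * T₂ ω : ℕ) : ℝ) ∂μ))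
      / Real.sqrt (variance (fun ω => ((W ω * T₁ ω : ℕ) : ℝ)) μ
          * variance (fun ω => ((W ω * T₂ ω : ℕ) : ℝ)) μ)
    = φ * Real.sqrt (lam₁ * lam₂ / ((1 + φ * lam₁) * (1 + φ * lam₂))) := by
  obtain ⟨hφ0, hφ1⟩ := hφ
  have hp : (0:ℝ) < 1 - φ := by linarith
  -- measurable casts
  have hW' : Measurable fun ω => (W ω : ℝ) := measurable_from_nat.comp hWm
  have hT₁' : Measurable fun ω => (T₁ ω : ℝ) := measurable_from_nat.comp hT₁m
  have hT₂' : Measurable fun ω => (T₂ ω : ℝ) := measurable_from_nat.comp hT₂m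
  have hpm₁ : ∀ k : ℕ, 0 ≤ Real.exp (-lam₁) * lam₁ ^ k / Nat.factorial k := fun k => by positivity
  have hpm₂ : ∀ k : ℕ, 0 ≤ Real.exp (-lam₂) * lam₂ ^ k / Nat.factorial k := fun k => by positivity
  -- Poisson moments
  have hE1 := nat_rv_integral μ T₁ hT₁m _ hpm₁ hT₁ (fun k => (k:ℝ))
    (fun k => Nat.cast_nonneg k) (hasSum_pois_mean lam₁)
  have hE2 := nat_rv_integral μ T₂ hT₂m _ hpm₂ hT₂ (fun k => (k:ℝ))
    (fun k => Nat.cast_nonneg k) (hasSum_pois_mean lam₂)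
  have hE1sq := nat_rv_integral μ T₁ hT₁m _ hpm₁ hT₁ (fun k => (k:ℝ)^2)
    (fun k => sq_nonneg _) (hasSum_pois_sq lam₁)
  have hE2sq := nat_rv_integral μ T₂ hT₂m _ hpm₂ hT₂ (fun k => (k:ℝ)^2)
    (fun k => sq_nonneg _) (hasSum_pois_sq lam₂)
  -- Bernoulli
  have hWs : MeasurableSet {ω | W ω = 1} := hWm (measurableSet_singleton 1)
  have hWind : (fun ω => (W ω : ℝ)) = Set.indicator {ω | W ω = 1} (fun _ => (1:ℝ)) := by
    funext ω
    rcases hW01 ω with h | h <;> simp [Set.indicator, h]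
  have hWintg : Integrable (fun ω => (W ω : ℝ)) μ := by
    rw [hWind]; exact (integrable_const (1:ℝ)).indicator hWs
  have hEW : ∫ ω, (W ω : ℝ) ∂μ = 1 - φ := by
    rw [hWind]
    have : ∫ ω, Set.indicator {ω | W ω = 1} (fun _ => (1:ℝ)) ω ∂μ = (μ {ω | W ω = 1}).toReal :=
      integral_indicator_one hWs
    rw [this, hW1, ENNReal.toReal_ofReal hp.le]
  -- independence of real casts
  have iWT₁ : IndepFun (fun ω => (W ω : ℝ)) (fun ω => (T₁ ω : ℝ)) μ :=
    hind₁.comp measurable_from_nat (measurable_from_nat.comp (measurable_fst (α := ℕ) (β := ℕ)))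
  have iWT₂ : IndepFun (fun ω => (W ω : ℝ)) (fun ω => (T₂ ω : ℝ)) μ :=
    hind₁.comp measurable_from_nat (measurable_from_nat.comp (measurable_snd (α := ℕ) (β := ℕ)))
  have iWT₁sq : IndepFun (fun ω => (W ω : ℝ)) (fun ω => (T₁ ω : ℝ)^2) μ :=
    hind₁.comp measurable_from_nat
      ((measurable_from_nat (f := fun n : ℕ => (n:ℝ)^2)).comp (measurable_fst (α := ℕ) (β := ℕ)))
  have iWT₂sq : IndepFun (fun ω => (W ω : ℝ)) (fun ω => (T₂ ω : ℝ)^2) μ :=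
    hind₁.comp measurable_from_nat
      ((measurable_from_nat (f := fun n : ℕ => (n:ℝ)^2)).comp (measurable_snd (α := ℕ) (β := ℕ)))
  have iWT₁T₂ : IndepFun (fun ω => (W ω : ℝ)) (fun ω => (T₁ ω : ℝ) * (T₂ ω : ℝ)) μ :=
    hind₁.comp measurable_from_nat
      ((measurable_from_nat.comp (measurable_fst (α := ℕ) (β := ℕ))).mul
        (measurable_from_nat.comp (measurable_snd (α := ℕ) (β := ℕ))))
  have iT₁T₂ : IndepFun (fun ω => (T₁ ω : ℝ)) (fun ω => (T₂ ω : ℝ)) μ :=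
    hind₂.comp measurable_from_nat measurable_from_nat
  -- expectations of products
  have hET₁T₂ : ∫ ω, (T₁ ω : ℝ) * (T₂ ω : ℝ) ∂μ = lam₁ * lam₂ := by
    rw [iT₁T₂.integral_fun_mul_eq_mul_integral hT₁'.aestronglyMeasurable hT₂'.aestronglyMeasurable,
      hE1.2, hE2.2]
  have hEX₁ : ∫ ω, (W ω : ℝ) * (T₁ ω : ℝ) ∂μ = (1-φ) * lam₁ := by
    rw [iWT₁.integral_fun_mul_eq_mul_integral hW'.aestronglyMeasurable hT₁'.aestronglyMeasurable, hEW, hE1.2]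
  have hEX₂ : ∫ ω, (W ω : ℝ) * (T₂ ω : ℝ) ∂μ = (1-φ) * lam₂ := by
    rw [iWT₂.integral_fun_mul_eq_mul_integral hW'.aestronglyMeasurable hT₂'.aestronglyMeasurable, hEW, hE2.2]
  have hEX₁X₂ : ∫ ω, (W ω : ℝ) * ((T₁ ω : ℝ) * (T₂ ω : ℝ)) ∂μ = (1-φ) * (lam₁ * lam₂) := by
    rw [iWT₁T₂.integral_fun_mul_eq_mul_integral hW'.aestronglyMeasurable
      (hT₁'.mul hT₂').aestronglyMeasurable, hEW, hET₁T₂]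
  have hEX₁sq : ∫ ω, (W ω : ℝ) * (T₁ ω : ℝ)^2 ∂μ = (1-φ) * (lam₁ + lam₁^2) := by
    rw [iWT₁sq.integral_fun_mul_eq_mul_integral hW'.aestronglyMeasurable
      (hT₁'.pow_const 2).aestronglyMeasurable, hEW, hE1sq.2]
  have hEX₂sq : ∫ ω, (W ω : ℝ) * (T₂ ω : ℝ)^2 ∂μ = (1-φ) * (lam₂ + lam₂^2) := by
    rw [iWT₂sq.integral_fun_mul_eq_mul_integral hW'.aestronglyMeasurable
      (hT₂'.pow_const 2).aestronglyMeasurable, hEW, hE2sq.2]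
  -- pointwise cast identities
  have hX₁cast : ∀ ω, ((W ω * T₁ ω : ℕ) : ℝ) = (W ω : ℝ) * (T₁ ω : ℝ) := fun ω => by push_cast; ring
  have hX₂cast : ∀ ω, ((W ω * T₂ ω : ℕ) : ℝ) = (W ω : ℝ) * (T₂ ω : ℝ) := fun ω => by push_cast; ring
  have hsq₁ : ∀ ω, ((W ω * T₁ ω : ℕ) : ℝ)^2 = (W ω : ℝ) * (T₁ ω : ℝ)^2 := fun ω => by
    rcases hW01 ω with h | h <;> push_cast [h] <;> ring
  have hsq₂ : ∀ ω, ((W ω * T₂ ω : ℕ) : ℝ)^2 = (W ω : ℝ) * (T₂ ω : ℝ)^2 := fun ω => by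
    rcases hW01 ω with h | h <;> push_cast [h] <;> ring
  have hprod : ∀ ω, ((W ω * T₁ ω : ℕ) : ℝ) * ((W ω * T₂ ω : ℕ) : ℝ)
      = (W ω : ℝ) * ((T₁ ω : ℝ) * (T₂ ω : ℝ)) := fun ω => by
    rcases hW01 ω with h | h <;> push_cast [h] <;> ring
  -- integrals of the actual random variables
  have hI₁ : ∫ ω, ((W ω * T₁ ω : ℕ) : ℝ) ∂μ = (1-φ) * lam₁ := by
    rw [← hEX₁]; exact integral_congr_ae (Filter.Eventually.of_forall hX₁cast)
  have hI₂ : ∫ ω, ((W ω * T₂ ω : ℕ) : ℝ) ∂μ = (1-φ) * lam₂ := by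
    rw [← hEX₂]; exact integral_congr_ae (Filter.Eventually.of_forall hX₂cast)
  have hIp : ∫ ω, ((W ω * T₁ ω : ℕ) : ℝ) * ((W ω * T₂ ω : ℕ) : ℝ) ∂μ = (1-φ) * (lam₁ * lam₂) := by
    rw [← hEX₁X₂]; exact integral_congr_ae (Filter.Eventually.of_forall hprod)
  -- variances
  have hintsq₁ : Integrable (fun ω => ((W ω * T₁ ω : ℕ) : ℝ)^2) μ := by
    have h := iWT₁sq.integrable_mul hWintg hE1sq.1
    exact h.congr (Filter.Eventually.of_forall fun ω => (hsq₁ ω).symm)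
  have hintsq₂ : Integrable (fun ω => ((W ω * T₂ ω : ℕ) : ℝ)^2) μ := by
    have h := iWT₂sq.integrable_mul hWintg hE2sq.1
    exact h.congr (Filter.Eventually.of_forall fun ω => (hsq₂ ω).symm)
  have hmem₁ : MemLp (fun ω => ((W ω * T₁ ω : ℕ) : ℝ)) 2 μ := by
    refine (memLp_two_iff_integrable_sq ?_).mpr ?_
    · exact (measurable_from_nat.comp (hWm.mul hT₁m)).aestronglyMeasurable
    · exact hintsq₁
  have hmem₂ : MemLp (fun ω => ((W ω * T₂ ω : ℕ) : ℝ)) 2 μ := by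
    refine (memLp_two_iff_integrable_sq ?_).mpr ?_
    · exact (measurable_from_nat.comp (hWm.mul hT₂m)).aestronglyMeasurable
    · exact hintsq₂
  have hvar₁ : variance (fun ω => ((W ω * T₁ ω : ℕ) : ℝ)) μ
      = (1-φ)*(lam₁+lam₁^2) - ((1-φ)*lam₁)^2 := by
    rw [variance_eq_sub hmem₁]
    have e1 : ∫ ω, ((fun ω => ((W ω * T₁ ω : ℕ) : ℝ))^2) ω ∂μ = (1-φ)*(lam₁+lam₁^2) := by
      rw [← hEX₁sq]
      exact integral_congr_ae (Filter.Eventually.of_forall fun ω => hsq₁ ω)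
    rw [e1, hI₁]
  have hvar₂ : variance (fun ω => ((W ω * T₂ ω : ℕ) : ℝ)) μ
      = (1-φ)*(lam₂+lam₂^2) - ((1-φ)*lam₂)^2 := by
    rw [variance_eq_sub hmem₂]
    have e1 : ∫ ω, ((fun ω => ((W ω * T₂ ω : ℕ) : ℝ))^2) ω ∂μ = (1-φ)*(lam₂+lam₂^2) := by
      rw [← hEX₂sq]
      exact integral_congr_ae (Filter.Eventually.of_forall fun ω => hsq₂ ω)
    rw [e1, hI₂]
  rw [hIp, hI₁, hI₂, hvar₁, hvar₂]
  exact final_arith φ lam₁ lam₂ hφ0 hφ1 hlam₁ hlam₂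
end

section
/- Fix λ₁, λ₂ > 0 and φ ∈ (0,1). For θ ∈ (0,1), let H⁺_θ denote the joint distribution function of the pair (X₁, X₂) = (W·T₁, W·T₂), where W ~ Bernoulli(1 − φ) is independent of (T₁, T₂) = (Y₁ + G_{θλ₁}^{−1}(U), Y₂ + G_{θλ₂}^{−1}(U)), with Y₁ ~ Poisson((1 − θ)λ₁), Y₂ ~ Poisson((1 − θ)λ₂), U ~ Uniform(0,1), and Y₁, Y₂, U mutually independent of each other and of W. If θ < θ′ then for all x₁, x₂ ∈ ℕ, H⁺_θ(x₁, x₂) ≤ H⁺_{θ′}(x₁, x₂); i.e., the model with parameter θ is smaller in the positive quadrant dependence ordering than the model with parameter θ′. -/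
open MeasureTheory ProbabilityTheory

/-- The Poisson(m) cumulative distribution function, with `poissonCDF m k = 0` for `k < 0`. -/
noncomputable def poissonCDF (m : ℝ) (k : ℤ) : ℝ :=
  if k < 0 then 0
  else ∑ i ∈ Finset.range (k.toNat + 1), Real.exp (-m) * m ^ i / Nat.factorial i

/-- The Poisson(m) quantile function: `min {k ∈ ℕ : G_m(k) ≥ u}`. -/
noncomputable def poissonQuantile (m : ℝ) (u : ℝ) : ℕ :=
  sInf {k : ℕ | u ≤ poissonCDF m k}

open scoped ENNReal

namespace BZIP

noncomputable def pois (m : ℝ) (k : ℕ) : ℝ := Real.exp (-m) * m ^ k / Nat.factorial k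

lemma pois_nonneg {m : ℝ} (hm : 0 ≤ m) (k : ℕ) : 0 ≤ pois m k := by
  unfold pois; positivity

lemma hasSum_pois {m : ℝ} : HasSum (pois m) 1 := by
  unfold pois
  apply (hasSum_mul_left_iff (Real.exp_ne_zero m)).mp
  simp only [mul_one]
  have : (fun i => Real.exp m * (Real.exp (-m) * m ^ i / (Nat.factorial i : ℝ))) =
      fun i => m ^ i / (Nat.factorial i : ℝ) := by
    ext n
    rw [mul_div_assoc, Real.exp_neg, ← mul_assoc, ← div_eq_mul_inv,
      div_self (Real.exp_ne_zero m), one_mul]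
  rw [this, Real.exp_eq_exp_ℝ]
  exact NormedSpace.expSeries_div_hasSum_exp m

lemma summable_pois {m : ℝ} : Summable (pois m) := hasSum_pois.summable

lemma tsum_pois {m : ℝ} : ∑' k, pois m k = 1 := hasSum_pois.tsum_eq

lemma poissonCDF_ofNat (m : ℝ) (n : ℕ) :
    poissonCDF m (n : ℤ) = ∑ i ∈ Finset.range (n + 1), pois m i := by
  unfold poissonCDF pois
  rw [if_neg (by omega)]
  simp

lemma poissonCDF_neg (m : ℝ) {n : ℤ} (hn : n < 0) : poissonCDF m n = 0 := by
  unfold poissonCDF; rw [if_pos hn]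

lemma poissonCDF_nonneg {m : ℝ} (hm : 0 ≤ m) (n : ℤ) : 0 ≤ poissonCDF m n := by
  unfold poissonCDF
  split
  · exact le_refl 0
  · positivity

lemma poissonCDF_le_one {m : ℝ} (hm : 0 ≤ m) (n : ℤ) : poissonCDF m n ≤ 1 := by
  unfold poissonCDF
  split
  · exact zero_le_one
  · calc ∑ i ∈ Finset.range (n.toNat + 1), Real.exp (-m) * m ^ i / (Nat.factorial i : ℝ)
        ≤ ∑' i, pois m i := Summable.sum_le_tsum _ (fun i _ => pois_nonneg hm i) summable_pois
    _ = 1 := tsum_pois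

lemma poissonCDF_mono {m : ℝ} (hm : 0 ≤ m) : Monotone (poissonCDF m) := by
  intro n n' hle
  unfold poissonCDF
  rcases lt_or_ge n 0 with h | h
  · rw [if_pos h]
    split
    · exact le_refl 0
    · positivity
  · rw [if_neg (by omega), if_neg (by omega)]
    apply Finset.sum_le_sum_of_subset_of_nonneg
    · apply Finset.range_subset_range.mpr; omega
    · intro i _ _; positivity

lemma exists_cdf_ge {m : ℝ} (hm : 0 ≤ m) {u : ℝ} (hu : u < 1) :
    ∃ k : ℕ, u ≤ poissonCDF m (k : ℤ) := by
  have h := hasSum_pois (m := m).tendsto_sum_nat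
  have := h.eventually_const_le hu
  rcases this.exists with ⟨n, hn⟩
  refine ⟨n, ?_⟩
  rw [poissonCDF_ofNat]
  calc u ≤ ∑ i ∈ Finset.range n, pois m i := hn
    _ ≤ ∑ i ∈ Finset.range (n+1), pois m i := by
        apply Finset.sum_le_sum_of_subset_of_nonneg
        · exact Finset.range_subset_range.mpr (by omega)
        · intro i _ _; exact pois_nonneg hm i

lemma quantile_le_iff {m : ℝ} (hm : 0 ≤ m) {u : ℝ} (hu : u < 1) (n : ℕ) :
    poissonQuantile m u ≤ n ↔ u ≤ poissonCDF m (n : ℤ) := by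
  constructor
  · intro h
    have hne : {k : ℕ | u ≤ poissonCDF m (k : ℤ)}.Nonempty := exists_cdf_ge hm hu
    have hmem := Nat.sInf_mem hne
    calc u ≤ poissonCDF m ((poissonQuantile m u : ℕ) : ℤ) := hmem
      _ ≤ poissonCDF m (n : ℤ) := poissonCDF_mono hm (by exact_mod_cast h)
  · intro h
    exact Nat.sInf_le h

lemma measurable_quantile_le_set {m : ℝ} (hm : 0 ≤ m) (n : ℕ) :
    MeasurableSet {u : ℝ | poissonQuantile m u ≤ n} := by
  have hset : {u : ℝ | poissonQuantile m u ≤ n}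
      = Set.Iic (poissonCDF m (n : ℤ)) ∪ ⋂ k : ℕ, Set.Ioi (poissonCDF m (k : ℤ)) := by
    ext u
    simp only [Set.mem_setOf_eq, Set.mem_union, Set.mem_Iic, Set.mem_iInter, Set.mem_Ioi]
    constructor
    · intro h
      by_cases hex : ∃ k : ℕ, u ≤ poissonCDF m (k : ℤ)
      · left
        have hmem := Nat.sInf_mem hex
        calc u ≤ poissonCDF m ((poissonQuantile m u : ℕ) : ℤ) := hmem
          _ ≤ poissonCDF m (n : ℤ) := poissonCDF_mono hm (by exact_mod_cast h)
      · right; push_neg at hex; exact hex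
    · rintro (h | h)
      · exact Nat.sInf_le h
      · have : {k : ℕ | u ≤ poissonCDF m (k : ℤ)} = ∅ := by
          ext k; simp only [Set.mem_setOf_eq, Set.mem_empty_iff_false, iff_false, not_le]
          exact h k
        unfold poissonQuantile
        rw [this, Nat.sInf_empty]
        omega
  rw [hset]
  exact (measurableSet_Iic).union (MeasurableSet.iInter fun k => measurableSet_Ioi)

lemma measurable_poissonQuantile {m : ℝ} (hm : 0 ≤ m) :
    Measurable (poissonQuantile m) := by
  apply measurable_to_countable'
  intro n
  have : poissonQuantile m ⁻¹' {n}
      = {u : ℝ | poissonQuantile m u ≤ n} \ (⋃ k ∈ Finset.range n, {u : ℝ | poissonQuantile m u ≤ k}) := by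
    ext u
    simp only [Set.mem_preimage, Set.mem_singleton_iff, Set.mem_diff, Set.mem_setOf_eq,
      Set.mem_iUnion, Finset.mem_range]
    constructor
    · rintro rfl
      exact ⟨le_refl _, by rintro ⟨k, hk, hle⟩; omega⟩
    · rintro ⟨h1, h2⟩
      push_neg at h2
      by_contra hne
      have hlt : poissonQuantile m u < n := by omega
      exact absurd (le_refl _) (not_le.mpr (h2 _ hlt))
  rw [this]
  exact ((measurable_quantile_le_set hm n).diff
    (MeasurableSet.biUnion (Finset.range n).countable_toSet
      fun k _ => measurable_quantile_le_set hm k))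


noncomputable def q (m : ℝ) (k : ℕ) : ℝ≥0∞ := ENNReal.ofReal (pois m k)

noncomputable def gE (m : ℝ) (n : ℤ) : ℝ≥0∞ := ENNReal.ofReal (poissonCDF m n)

lemma tsum_q {m : ℝ} (hm : 0 ≤ m) : ∑' k, q m k = 1 := by
  unfold q
  rw [← ENNReal.ofReal_tsum_of_nonneg (pois_nonneg hm) summable_pois, tsum_pois,
    ENNReal.ofReal_one]

lemma gE_le_one {m : ℝ} (hm : 0 ≤ m) (n : ℤ) : gE m n ≤ 1 := by
  unfold gE
  rw [← ENNReal.ofReal_one]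
  exact ENNReal.ofReal_le_ofReal (poissonCDF_le_one hm n)

/-- Poisson pmf convolution identity. -/
lemma pois_conv {c a : ℝ} (k : ℕ) :
    pois (c + a) k = ∑ j ∈ Finset.range (k + 1), pois c j * pois a (k - j) := by
  unfold pois
  rw [add_pow, Finset.mul_sum, Finset.sum_div]
  apply Finset.sum_congr rfl
  intro j hj
  have hjk : j ≤ k := by
    simp only [Finset.mem_range] at hj; omega
  have hfac : (Nat.choose k j : ℝ) = (Nat.factorial k : ℝ) / ((Nat.factorial j : ℝ) * (Nat.factorial (k - j) : ℝ)) := by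
    rw [eq_div_iff (by positivity)]
    have := Nat.choose_mul_factorial_mul_factorial hjk
    have : (Nat.choose k j * Nat.factorial j * Nat.factorial (k - j) : ℝ) = (Nat.factorial k : ℝ) := by
      exact_mod_cast congrArg (Nat.cast (R := ℝ)) this
    linarith [this]
  have hexp : Real.exp (-(c + a)) = Real.exp (-c) * Real.exp (-a) := by
    rw [← Real.exp_add]; ring_nf
  rw [hexp, hfac]
  have h1 : (Nat.factorial k : ℝ) ≠ 0 := by positivity
  have h2 : (Nat.factorial j : ℝ) ≠ 0 := by positivity
  have h3 : (Nat.factorial (k-j) : ℝ) ≠ 0 := by positivity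
  field_simp

lemma q_conv {c a : ℝ} (hc : 0 ≤ c) (ha : 0 ≤ a) (k : ℕ) :
    q (c + a) k = ∑ j ∈ Finset.range (k + 1), q c j * q a (k - j) := by
  unfold q
  rw [pois_conv, ENNReal.ofReal_sum_of_nonneg (fun j _ => mul_nonneg (pois_nonneg hc j) (pois_nonneg ha _))]
  exact Finset.sum_congr rfl fun j _ => ENNReal.ofReal_mul (pois_nonneg hc j)

/-- Key decomposition lemma. -/
lemma key {c a : ℝ} (hc : 0 ≤ c) (ha : 0 ≤ a) (V : ℤ → ℝ≥0∞) (x : ℤ) :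
    ∑' k : ℕ, q (c + a) k * V (x - k)
      = ∑' m : ℕ, q a m * ∑' j : ℕ, q c j * V (x - m - j) := by
  have h1 : ∀ k : ℕ, q (c + a) k * V (x - k)
      = ∑' j : ℕ, (if j ≤ k then q c j * q a (k - j) * V (x - k) else 0) := by
    intro k
    rw [q_conv hc ha, Finset.sum_mul,
      tsum_eq_sum (s := Finset.range (k + 1)) (f := fun j => if j ≤ k then q c j * q a (k - j) * V (x - k) else 0)
        (fun j hj => if_neg (by simp only [Finset.mem_range] at hj; omega))]
    apply Finset.sum_congr rfl
    intro j hj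
    rw [if_pos (by simp only [Finset.mem_range] at hj; omega), mul_assoc]
  calc ∑' k : ℕ, q (c + a) k * V (x - k)
      = ∑' k : ℕ, ∑' j : ℕ, (if j ≤ k then q c j * q a (k - j) * V (x - k) else 0) := by
        exact tsum_congr h1
    _ = ∑' j : ℕ, ∑' k : ℕ, (if j ≤ k then q c j * q a (k - j) * V (x - k) else 0) :=
        ENNReal.tsum_comm
    _ = ∑' j : ℕ, ∑' m : ℕ, q c j * q a m * V (x - (m + j)) := by
        apply tsum_congr; intro j
        rw [← Function.Injective.tsum_eq (g := fun m : ℕ => m + j) (add_left_injective j) ?_]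
        · apply tsum_congr; intro m
          rw [if_pos (by omega)]
          have h2 : m + j - j = m := by omega
          rw [h2]
          have h3 : ((m + j : ℕ) : ℤ) = (m : ℤ) + (j : ℤ) := by push_cast; ring
          rw [h3]
        · intro k hk
          by_contra hc2
          simp only [Set.mem_range] at hc2
          push_neg at hc2
          have hklt : k < j := by by_contra h2; push_neg at h2; exact hc2 (k - j) (by omega)
          exact hk (if_neg (by omega))
    _ = ∑' m : ℕ, ∑' j : ℕ, q c j * q a m * V (x - (m + j)) := ENNReal.tsum_comm
    _ = ∑' m : ℕ, q a m * ∑' j : ℕ, q c j * V (x - m - j) := by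
        apply tsum_congr; intro m
        rw [← ENNReal.tsum_mul_left]
        apply tsum_congr; intro j
        have : x - ((m : ℤ) + j) = x - m - j := by ring
        rw [this]; ring

/-- Indicator of nonnegativity. -/
noncomputable def I (d : ℤ) : ℝ≥0∞ := if 0 ≤ d then 1 else 0

lemma gE_eq_tsum {m : ℝ} (hm : 0 ≤ m) (n : ℤ) :
    gE m n = ∑' i : ℕ, q m i * I (n - i) := by
  rcases lt_or_ge n 0 with h | h
  · unfold gE
    rw [poissonCDF_neg m h, ENNReal.ofReal_zero]
    symm
    apply (Summable.tsum_eq_zero_iff ENNReal.summable).mpr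
    intro i
    have : I (n - i) = 0 := by unfold I; rw [if_neg (by omega)]
    rw [this, mul_zero]
  · obtain ⟨t, rfl⟩ : ∃ t : ℕ, n = (t : ℤ) := ⟨n.toNat, by omega⟩
    unfold gE
    rw [poissonCDF_ofNat,
      ENNReal.ofReal_sum_of_nonneg (fun i _ => pois_nonneg hm i),
      tsum_eq_sum (s := Finset.range (t + 1)) (f := fun i : ℕ => q m i * I ((t : ℤ) - i))
        (fun i hi => by
          show q m i * I ((t : ℤ) - i) = 0
          have : I ((t : ℤ) - i) = 0 := by
            unfold I
            rw [if_neg (by simp only [Finset.mem_range] at hi; omega)]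
          rw [this, mul_zero])]
    apply Finset.sum_congr rfl
    intro i hi
    have : I ((t : ℤ) - i) = 1 := by
      unfold I
      rw [if_pos (by simp only [Finset.mem_range] at hi; omega)]
    rw [this, mul_one]
    rfl

/-- Poisson CDF convolution in ENNReal form. -/
lemma gE_conv {c b : ℝ} (hc : 0 ≤ c) (hb : 0 ≤ b) (n : ℤ) :
    gE (c + b) n = ∑' j : ℕ, q c j * gE b (n - j) := by
  rw [gE_eq_tsum (by linarith) n, key hc hb I n]
  calc ∑' m : ℕ, q b m * ∑' j : ℕ, q c j * I (n - m - j)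
      = ∑' m : ℕ, ∑' j : ℕ, q b m * (q c j * I (n - m - j)) :=
        tsum_congr fun m => ENNReal.tsum_mul_left.symm
    _ = ∑' j : ℕ, ∑' m : ℕ, q b m * (q c j * I (n - m - j)) := ENNReal.tsum_comm
    _ = ∑' j : ℕ, q c j * ∑' m : ℕ, q b m * I (n - j - m) := by
        apply tsum_congr; intro j
        rw [← ENNReal.tsum_mul_left]
        apply tsum_congr; intro m
        have : n - m - j = n - j - m := by ring
        rw [this]; ring
    _ = ∑' j : ℕ, q c j * gE b (n - j) := by
        apply tsum_congr; intro j
        rw [gE_eq_tsum hb (n - j)]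

/-- The iterated-sum representation of the continuous part of the joint CDF. -/
noncomputable def Titer (a₁ a₂ b₁ b₂ : ℝ) (x₁ x₂ : ℕ) : ℝ≥0∞ :=
  ∑' k₁ : ℕ, q a₁ k₁ * ∑' k₂ : ℕ, q a₂ k₂ *
    min (gE b₁ ((x₁ : ℤ) - k₁)) (gE b₂ ((x₂ : ℤ) - k₂))

/-- The double-j bound. -/
lemma double_bound {c₁ c₂ b₁ b₂ : ℝ} (hc₁ : 0 ≤ c₁) (hc₂ : 0 ≤ c₂) (hb₁ : 0 ≤ b₁)
    (hb₂ : 0 ≤ b₂) (n₁ n₂ : ℤ) :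
    ∑' j₁ : ℕ, q c₁ j₁ * ∑' j₂ : ℕ, q c₂ j₂ *
        min (gE b₁ (n₁ - j₁)) (gE b₂ (n₂ - j₂))
      ≤ min (gE (c₁ + b₁) n₁) (gE (c₂ + b₂) n₂) := by
  apply le_min
  · calc ∑' j₁ : ℕ, q c₁ j₁ * ∑' j₂ : ℕ, q c₂ j₂ *
          min (gE b₁ (n₁ - j₁)) (gE b₂ (n₂ - j₂))
        ≤ ∑' j₁ : ℕ, q c₁ j₁ * ∑' j₂ : ℕ, q c₂ j₂ * gE b₁ (n₁ - j₁) := by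
          apply ENNReal.tsum_le_tsum; intro j₁
          apply mul_le_mul_right
          apply ENNReal.tsum_le_tsum; intro j₂
          exact mul_le_mul_right (min_le_left _ _) _
      _ = ∑' j₁ : ℕ, q c₁ j₁ * gE b₁ (n₁ - j₁) := by
          apply tsum_congr; intro j₁
          rw [ENNReal.tsum_mul_right, tsum_q hc₂, one_mul]
      _ = gE (c₁ + b₁) n₁ := (gE_conv hc₁ hb₁ n₁).symm
  · calc ∑' j₁ : ℕ, q c₁ j₁ * ∑' j₂ : ℕ, q c₂ j₂ *
          min (gE b₁ (n₁ - j₁)) (gE b₂ (n₂ - j₂))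
        ≤ ∑' j₁ : ℕ, q c₁ j₁ * ∑' j₂ : ℕ, q c₂ j₂ * gE b₂ (n₂ - j₂) := by
          apply ENNReal.tsum_le_tsum; intro j₁
          apply mul_le_mul_right
          apply ENNReal.tsum_le_tsum; intro j₂
          exact mul_le_mul_right (min_le_right _ _) _
      _ = ∑' j₁ : ℕ, q c₁ j₁ * gE (c₂ + b₂) n₂ := by
          apply tsum_congr; intro j₁
          rw [(gE_conv hc₂ hb₂ n₂).symm]
      _ = gE (c₂ + b₂) n₂ := by
          rw [ENNReal.tsum_mul_right, tsum_q hc₁, one_mul]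

lemma swap_mul (f g : ℕ → ℝ≥0∞) (C : ℕ → ℕ → ℝ≥0∞) :
    ∑' k : ℕ, f k * ∑' m : ℕ, g m * C k m
      = ∑' m : ℕ, g m * ∑' k : ℕ, f k * C k m := by
  calc ∑' k : ℕ, f k * ∑' m : ℕ, g m * C k m
      = ∑' k : ℕ, ∑' m : ℕ, f k * (g m * C k m) :=
        tsum_congr fun k => ENNReal.tsum_mul_left.symm
    _ = ∑' m : ℕ, ∑' k : ℕ, f k * (g m * C k m) := ENNReal.tsum_comm
    _ = ∑' m : ℕ, g m * ∑' k : ℕ, f k * C k m := by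
        apply tsum_congr; intro m
        rw [← ENNReal.tsum_mul_left]
        apply tsum_congr; intro k
        ring

/-- Core monotonicity: moving weight `cᵢ` from the independent part into the comonotonic
part increases the iterated sum. -/
lemma Titer_mono {a₁ a₂ b₁ b₂ c₁ c₂ : ℝ} (ha₁ : 0 ≤ a₁) (ha₂ : 0 ≤ a₂) (hb₁ : 0 ≤ b₁)
    (hb₂ : 0 ≤ b₂) (hc₁ : 0 ≤ c₁) (hc₂ : 0 ≤ c₂) (x₁ x₂ : ℕ) :
    Titer (c₁ + a₁) (c₂ + a₂) b₁ b₂ x₁ x₂ ≤ Titer a₁ a₂ (c₁ + b₁) (c₂ + b₂) x₁ x₂ := by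
  unfold Titer
  have step1 : ∑' k₁ : ℕ, q (c₁ + a₁) k₁ * ∑' k₂ : ℕ, q (c₂ + a₂) k₂ *
        min (gE b₁ ((x₁ : ℤ) - k₁)) (gE b₂ ((x₂ : ℤ) - k₂))
      = ∑' m₂ : ℕ, q a₂ m₂ * ∑' m₁ : ℕ, q a₁ m₁ * ∑' j₁ : ℕ, q c₁ j₁ * ∑' j₂ : ℕ, q c₂ j₂ *
        min (gE b₁ (((x₁ : ℤ) - m₁) - j₁)) (gE b₂ (((x₂ : ℤ) - m₂) - j₂)) := by
    calc ∑' k₁ : ℕ, q (c₁ + a₁) k₁ * ∑' k₂ : ℕ, q (c₂ + a₂) k₂ *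
          min (gE b₁ ((x₁ : ℤ) - k₁)) (gE b₂ ((x₂ : ℤ) - k₂))
        = ∑' k₁ : ℕ, q (c₁ + a₁) k₁ * ∑' m₂ : ℕ, q a₂ m₂ * ∑' j₂ : ℕ, q c₂ j₂ *
          min (gE b₁ ((x₁ : ℤ) - k₁)) (gE b₂ ((x₂ : ℤ) - m₂ - j₂)) := by
          apply tsum_congr; intro k₁
          congr 1
          exact key hc₂ ha₂ (fun n₂ => min (gE b₁ ((x₁ : ℤ) - k₁)) (gE b₂ n₂)) (x₂ : ℤ)
      _ = ∑' m₂ : ℕ, q a₂ m₂ * ∑' k₁ : ℕ, q (c₁ + a₁) k₁ * ∑' j₂ : ℕ, q c₂ j₂ *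
          min (gE b₁ ((x₁ : ℤ) - k₁)) (gE b₂ ((x₂ : ℤ) - m₂ - j₂)) :=
          swap_mul _ _ _
      _ = ∑' m₂ : ℕ, q a₂ m₂ * ∑' m₁ : ℕ, q a₁ m₁ * ∑' j₁ : ℕ, q c₁ j₁ * ∑' j₂ : ℕ, q c₂ j₂ *
          min (gE b₁ (((x₁ : ℤ) - m₁) - j₁)) (gE b₂ (((x₂ : ℤ) - m₂) - j₂)) := by
          apply tsum_congr; intro m₂
          congr 1
          exact key hc₁ ha₁ (fun n₁ => ∑' j₂ : ℕ, q c₂ j₂ *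
            min (gE b₁ n₁) (gE b₂ ((x₂ : ℤ) - m₂ - j₂))) (x₁ : ℤ)
  rw [step1]
  have step2 : ∑' m₂ : ℕ, q a₂ m₂ * ∑' m₁ : ℕ, q a₁ m₁ *
        min (gE (c₁ + b₁) ((x₁ : ℤ) - m₁)) (gE (c₂ + b₂) ((x₂ : ℤ) - m₂))
      = ∑' m₁ : ℕ, q a₁ m₁ * ∑' m₂ : ℕ, q a₂ m₂ *
        min (gE (c₁ + b₁) ((x₁ : ℤ) - m₁)) (gE (c₂ + b₂) ((x₂ : ℤ) - m₂)) :=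
    (swap_mul _ _ _).symm
  rw [← step2]
  apply ENNReal.tsum_le_tsum; intro m₂
  apply mul_le_mul_right
  apply ENNReal.tsum_le_tsum; intro m₁
  apply mul_le_mul_right
  exact double_bound hc₁ hc₂ hb₁ hb₂ ((x₁ : ℤ) - m₁) ((x₂ : ℤ) - m₂)

lemma vol_Iic_inter {c : ℝ} (hc : c ≤ 1) :
    volume (Set.Iic c ∩ Set.Ioo (0 : ℝ) 1) = ENNReal.ofReal c := by
  rcases le_or_gt c 0 with h | h
  · have hempty : Set.Iic c ∩ Set.Ioo (0 : ℝ) 1 = ∅ := by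
      ext u
      simp only [Set.mem_inter_iff, Set.mem_Iic, Set.mem_Ioo, Set.mem_empty_iff_false, iff_false]
      rintro ⟨h1, h2, _⟩; linarith
    rw [hempty, measure_empty, Eq.comm, ENNReal.ofReal_eq_zero]
    exact h
  · apply le_antisymm
    · calc volume (Set.Iic c ∩ Set.Ioo (0 : ℝ) 1) ≤ volume (Set.Ioc 0 c) := by
            apply measure_mono
            rintro u ⟨h1, h2, _⟩
            exact ⟨h2, h1⟩
        _ = ENNReal.ofReal c := by rw [Real.volume_Ioc, sub_zero]
    · calc ENNReal.ofReal c = volume (Set.Ioo 0 c) := by rw [Real.volume_Ioo, sub_zero]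
        _ ≤ volume (Set.Iic c ∩ Set.Ioo (0 : ℝ) 1) := by
            apply measure_mono
            rintro u ⟨h1, h2⟩
            exact ⟨le_of_lt h2, h1, lt_of_lt_of_le h2 hc⟩

lemma ofReal_min (a b : ℝ) :
    ENNReal.ofReal (min a b) = min (ENNReal.ofReal a) (ENNReal.ofReal b) := by
  rcases le_total a b with h | h
  · rw [min_eq_left h, min_eq_left (ENNReal.ofReal_le_ofReal h)]
  · rw [min_eq_right h, min_eq_right (ENNReal.ofReal_le_ofReal h)]

lemma model_measure {Ω : Type*} [MeasurableSpace Ω] (μ : Measure Ω) [IsProbabilityMeasure μ]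
    (lam₁ lam₂ φ θ : ℝ) (hlam₁ : 0 < lam₁) (hlam₂ : 0 < lam₂)
    (hφ : φ ∈ Set.Ioo (0 : ℝ) 1) (hθ : θ ∈ Set.Ioo (0 : ℝ) 1)
    (W : Ω → ℕ) (Y₁ Y₂ : Ω → ℕ) (U : Ω → ℝ)
    (hWm : Measurable W) (hY₁m : Measurable Y₁) (hY₂m : Measurable Y₂) (hUm : Measurable U)
    (hW01 : ∀ ω, W ω = 0 ∨ W ω = 1)
    (hW1 : μ {ω | W ω = 1} = ENNReal.ofReal (1 - φ))
    (hY₁ : ∀ k : ℕ, μ {ω | Y₁ ω = k}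
      = ENNReal.ofReal (Real.exp (-((1 - θ) * lam₁)) * ((1 - θ) * lam₁) ^ k / Nat.factorial k))
    (hY₂ : ∀ k : ℕ, μ {ω | Y₂ ω = k}
      = ENNReal.ofReal (Real.exp (-((1 - θ) * lam₂)) * ((1 - θ) * lam₂) ^ k / Nat.factorial k))
    (hU : Measure.map U μ = volume.restrict (Set.Ioo (0 : ℝ) 1))
    (hind₁ : IndepFun W (fun ω => (Y₁ ω, Y₂ ω, U ω)) μ)
    (hind₂ : IndepFun Y₁ (fun ω => (Y₂ ω, U ω)) μ)
    (hind₃ : IndepFun Y₂ U μ) (x₁ x₂ : ℕ) :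
    μ {ω | W ω * (Y₁ ω + poissonQuantile (θ * lam₁) (U ω)) ≤ x₁ ∧
           W ω * (Y₂ ω + poissonQuantile (θ * lam₂) (U ω)) ≤ x₂}
      = ENNReal.ofReal φ + ENNReal.ofReal (1 - φ)
          * Titer ((1 - θ) * lam₁) ((1 - θ) * lam₂) (θ * lam₁) (θ * lam₂) x₁ x₂ := by
  obtain ⟨hθ0, hθ1⟩ := hθ
  obtain ⟨hφ0, hφ1⟩ := hφ
  set b₁ : ℝ := θ * lam₁ with hb₁def
  set b₂ : ℝ := θ * lam₂ with hb₂def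
  set a₁ : ℝ := (1 - θ) * lam₁ with ha₁def
  set a₂ : ℝ := (1 - θ) * lam₂ with ha₂def
  have hb₁ : 0 ≤ b₁ := by positivity
  have hb₂ : 0 ≤ b₂ := by positivity
  have ha₁ : 0 ≤ a₁ := by nlinarith
  have ha₂ : 0 ≤ a₂ := by nlinarith
  -- the quantile maps are measurable
  have hq₁m : Measurable (poissonQuantile b₁) := measurable_poissonQuantile hb₁
  have hq₂m : Measurable (poissonQuantile b₂) := measurable_poissonQuantile hb₂
  -- the "continuous part" event
  set F : Set Ω := {ω | Y₁ ω + poissonQuantile b₁ (U ω) ≤ x₁ ∧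
      Y₂ ω + poissonQuantile b₂ (U ω) ≤ x₂} with hFdef
  -- the target set S in the product space
  set S : Set (ℕ × ℕ × ℝ) := {p | p.1 + poissonQuantile b₁ p.2.2 ≤ x₁ ∧
      p.2.1 + poissonQuantile b₂ p.2.2 ≤ x₂} with hSdef
  have hSm : MeasurableSet S := by
    apply MeasurableSet.inter
    · exact measurableSet_le (measurable_fst.add (hq₁m.comp (measurable_snd.comp measurable_snd)))
        measurable_const
    · exact measurableSet_le ((measurable_fst.comp measurable_snd).add
        (hq₂m.comp (measurable_snd.comp measurable_snd))) measurable_const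
  have hFm : MeasurableSet F := (hY₁m.prodMk (hY₂m.prodMk hUm)) hSm
  -- split off the W part
  have hsplit : {ω | W ω * (Y₁ ω + poissonQuantile b₁ (U ω)) ≤ x₁ ∧
        W ω * (Y₂ ω + poissonQuantile b₂ (U ω)) ≤ x₂}
      = {ω | W ω = 0} ∪ ({ω | W ω = 1} ∩ F) := by
    ext ω
    rcases hW01 ω with h | h <;>
      simp [hFdef, h, Set.mem_setOf_eq]
  have hW1set : {ω | W ω = 1} = W ⁻¹' {1} := rfl
  have hW0m : MeasurableSet {ω | W ω = 0} := hWm (measurableSet_singleton 0)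
  have hW1m : MeasurableSet {ω | W ω = 1} := hWm (measurableSet_singleton 1)
  have hdisj : Disjoint {ω | W ω = 0} ({ω | W ω = 1} ∩ F) := by
    rw [Set.disjoint_left]
    rintro ω h0 ⟨h1, _⟩
    simp only [Set.mem_setOf_eq] at h0 h1
    omega
  -- measure of the W = 0 part
  have hW0 : μ {ω | W ω = 0} = ENNReal.ofReal φ := by
    have hcompl : {ω | W ω = 0} = {ω | W ω = 1}ᶜ := by
      ext ω
      rcases hW01 ω with h | h <;> simp [h]
    rw [hcompl, measure_compl hW1m (measure_ne_top μ _), hW1, measure_univ]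
    rw [← ENNReal.ofReal_one, ← ENNReal.ofReal_sub _ (by linarith)]
    norm_num
  -- independence of W and the rest
  have hWF : μ ({ω | W ω = 1} ∩ F) = ENNReal.ofReal (1 - φ) * μ F := by
    have : {ω | W ω = 1} ∩ F = W ⁻¹' {1} ∩ (fun ω => (Y₁ ω, Y₂ ω, U ω)) ⁻¹' S := rfl
    rw [this, hind₁.measure_inter_preimage_eq_mul _ _ (measurableSet_singleton 1) hSm, ← hW1set,
      hW1]
    rfl
  -- B sets in the U variable
  set B : ℕ → ℕ → Set ℝ := fun k₁ k₂ =>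
    {u | k₁ + poissonQuantile b₁ u ≤ x₁ ∧ k₂ + poissonQuantile b₂ u ≤ x₂} with hBdef
  have hBm : ∀ k₁ k₂, MeasurableSet (B k₁ k₂) := by
    intro k₁ k₂
    apply MeasurableSet.inter
    · exact measurableSet_le (measurable_const.add hq₁m) measurable_const
    · exact measurableSet_le (measurable_const.add hq₂m) measurable_const
  -- measure of U in B
  have hUB : ∀ k₁ k₂, μ (U ⁻¹' B k₁ k₂)
      = min (gE b₁ ((x₁ : ℤ) - k₁)) (gE b₂ ((x₂ : ℤ) - k₂)) := by
    intro k₁ k₂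
    rw [← Measure.map_apply hUm (hBm k₁ k₂), hU, Measure.restrict_apply (hBm k₁ k₂)]
    set c₁ : ℝ := poissonCDF b₁ ((x₁ : ℤ) - k₁) with hc₁def
    set c₂ : ℝ := poissonCDF b₂ ((x₂ : ℤ) - k₂) with hc₂def
    have hBeq : B k₁ k₂ ∩ Set.Ioo (0 : ℝ) 1 = Set.Iic (min c₁ c₂) ∩ Set.Ioo (0 : ℝ) 1 := by
      ext u
      simp only [Set.mem_inter_iff, Set.mem_Ioo, Set.mem_Iic, le_min_iff, hBdef,
        Set.mem_setOf_eq]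
      constructor
      · rintro ⟨⟨h1, h2⟩, hu0, hu1⟩
        refine ⟨⟨?_, ?_⟩, hu0, hu1⟩
        · have hk₁ : k₁ ≤ x₁ := by omega
          have : poissonQuantile b₁ u ≤ x₁ - k₁ := by omega
          have := (quantile_le_iff hb₁ hu1 (x₁ - k₁)).mp this
          rwa [hc₁def, show ((x₁ : ℤ) - k₁) = ((x₁ - k₁ : ℕ) : ℤ) by omega]
        · have hk₂ : k₂ ≤ x₂ := by omega
          have : poissonQuantile b₂ u ≤ x₂ - k₂ := by omega
          have := (quantile_le_iff hb₂ hu1 (x₂ - k₂)).mp this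
          rwa [hc₂def, show ((x₂ : ℤ) - k₂) = ((x₂ - k₂ : ℕ) : ℤ) by omega]
      · rintro ⟨⟨h1, h2⟩, hu0, hu1⟩
        refine ⟨⟨?_, ?_⟩, hu0, hu1⟩
        · by_cases hk₁ : k₁ ≤ x₁
          · have h1' : u ≤ poissonCDF b₁ (((x₁ - k₁ : ℕ) : ℤ)) := by
              rwa [show ((x₁ - k₁ : ℕ) : ℤ) = ((x₁ : ℤ) - k₁) by omega]
            have := (quantile_le_iff hb₁ hu1 (x₁ - k₁)).mpr h1'
            omega
          · exfalso
            have : c₁ = 0 := poissonCDF_neg b₁ (by omega)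
            rw [this] at h1
            linarith
        · by_cases hk₂ : k₂ ≤ x₂
          · have h2' : u ≤ poissonCDF b₂ (((x₂ - k₂ : ℕ) : ℤ)) := by
              rwa [show ((x₂ - k₂ : ℕ) : ℤ) = ((x₂ : ℤ) - k₂) by omega]
            have := (quantile_le_iff hb₂ hu1 (x₂ - k₂)).mpr h2'
            omega
          · exfalso
            have : c₂ = 0 := poissonCDF_neg b₂ (by omega)
            rw [this] at h2
            linarith
    rw [hBeq, vol_Iic_inter (le_trans (min_le_left c₁ c₂) (poissonCDF_le_one hb₁ _)),
      ofReal_min]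
    rfl
  -- decompose F according to the values of (Y₁, Y₂)
  set s : ℕ × ℕ → Set Ω := fun p =>
    Y₁ ⁻¹' {p.1} ∩ ((fun ω => (Y₂ ω, U ω)) ⁻¹' ({p.2} ×ˢ B p.1 p.2)) with hsdef
  have hsm : ∀ p : ℕ × ℕ, MeasurableSet (s p) := fun p =>
    (hY₁m (measurableSet_singleton p.1)).inter
      ((hY₂m.prodMk hUm) ((measurableSet_singleton p.2).prod (hBm p.1 p.2)))
  have hFunion : F = ⋃ p : ℕ × ℕ, s p := by
    ext ω
    simp only [hFdef, Set.mem_setOf_eq, Set.mem_iUnion, hsdef, Set.mem_inter_iff,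
      Set.mem_preimage, Set.mem_singleton_iff, Set.mem_prod, hBdef, Prod.exists]
    constructor
    · rintro ⟨h1, h2⟩
      exact ⟨Y₁ ω, Y₂ ω, rfl, rfl, h1, h2⟩
    · rintro ⟨k₁, k₂, rfl, rfl, h1, h2⟩
      exact ⟨h1, h2⟩
  have hsdisj : Pairwise (Function.onFun Disjoint s) := by
    intro p p' hne
    rw [Function.onFun, Set.disjoint_left]
    rintro ω ⟨h1, h2, _⟩ ⟨h1', h2', _⟩
    simp only [Set.mem_preimage, Set.mem_singleton_iff] at h1 h2 h1' h2'
    exact hne (Prod.ext (h1 ▸ h1') (h2 ▸ h2'))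
  have hsmeas : ∀ p : ℕ × ℕ, μ (s p)
      = q a₁ p.1 * (q a₂ p.2 * min (gE b₁ ((x₁ : ℤ) - p.1)) (gE b₂ ((x₂ : ℤ) - p.2))) := by
    rintro ⟨k₁, k₂⟩
    rw [hsdef]
    simp only []
    rw [hind₂.measure_inter_preimage_eq_mul _ _ (measurableSet_singleton k₁)
      ((measurableSet_singleton k₂).prod (hBm k₁ k₂))]
    have hsplit2 : (fun ω => (Y₂ ω, U ω)) ⁻¹' ({k₂} ×ˢ B k₁ k₂)
        = Y₂ ⁻¹' {k₂} ∩ U ⁻¹' B k₁ k₂ := by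
      ext ω
      simp only [Set.mem_preimage, Set.mem_prod, Set.mem_singleton_iff, Set.mem_inter_iff]
      try tauto
    rw [hsplit2, hind₃.measure_inter_preimage_eq_mul _ _ (measurableSet_singleton k₂)
      (hBm k₁ k₂), hUB k₁ k₂]
    have e₁ : μ (Y₁ ⁻¹' {k₁}) = q a₁ k₁ := by
      rw [show Y₁ ⁻¹' {k₁} = {ω | Y₁ ω = k₁} from rfl, hY₁ k₁]; rfl
    have e₂ : μ (Y₂ ⁻¹' {k₂}) = q a₂ k₂ := by
      rw [show Y₂ ⁻¹' {k₂} = {ω | Y₂ ω = k₂} from rfl, hY₂ k₂]; rfl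
    rw [e₁, e₂]
  have hFmeasure : μ F = Titer a₁ a₂ b₁ b₂ x₁ x₂ := by
    rw [hFunion, measure_iUnion hsdisj hsm]
    rw [tsum_congr hsmeas, ENNReal.tsum_prod']
    unfold Titer
    apply tsum_congr
    intro k₁
    show ∑' k₂ : ℕ, q a₁ k₁ * (q a₂ k₂ * (gE b₁ ((x₁ : ℤ) - k₁) ⊓ gE b₂ ((x₂ : ℤ) - k₂)))
      = q a₁ k₁ * ∑' k₂ : ℕ, q a₂ k₂ * (gE b₁ ((x₁ : ℤ) - k₁) ⊓ gE b₂ ((x₂ : ℤ) - k₂))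
    exact ENNReal.tsum_mul_left
  rw [hsplit, measure_union hdisj (hW1m.inter hFm), hW0, hWF, hFmeasure]

end BZIP

/-- PQD ordering in `θ` for the comonotonic-shock bivariate zero-inflated Poisson model
`BZIP⁺(λ₁, λ₂, θ, φ)`: if `θ < θ'` then the joint CDF at parameter `θ` is pointwise at most
the joint CDF at parameter `θ'`. Each model is `(X₁, X₂) = (W T₁, W T₂)` with
`(T₁, T₂) = (Y₁ + G_{θλ₁}⁻¹(U), Y₂ + G_{θλ₂}⁻¹(U))`, where `W ~ Bernoulli(1-φ)`,
`Y₁ ~ Poisson((1-θ)λ₁)`, `Y₂ ~ Poisson((1-θ)λ₂)`, `U ~ Uniform(0,1)`, all mutually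
independent (expressed by the equivalent sequential conditions `W ⟂ (Y₁, Y₂, U)`,
`Y₁ ⟂ (Y₂, U)`, `Y₂ ⟂ U`). -/
theorem stmt_15 {Ω Ω' : Type*} [MeasurableSpace Ω] [MeasurableSpace Ω']
    (μ : Measure Ω) (μ' : Measure Ω') [IsProbabilityMeasure μ] [IsProbabilityMeasure μ']
    (lam₁ lam₂ φ θ θ' : ℝ) (hlam₁ : 0 < lam₁) (hlam₂ : 0 < lam₂)
    (hφ : φ ∈ Set.Ioo (0 : ℝ) 1) (hθ : θ ∈ Set.Ioo (0 : ℝ) 1) (hθ' : θ' ∈ Set.Ioo (0 : ℝ) 1)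
    (hlt : θ < θ')
    (W : Ω → ℕ) (Y₁ Y₂ : Ω → ℕ) (U : Ω → ℝ)
    (hWm : Measurable W) (hY₁m : Measurable Y₁) (hY₂m : Measurable Y₂) (hUm : Measurable U)
    (hW01 : ∀ ω, W ω = 0 ∨ W ω = 1)
    (hW1 : μ {ω | W ω = 1} = ENNReal.ofReal (1 - φ))
    (hY₁ : ∀ k : ℕ, μ {ω | Y₁ ω = k}
      = ENNReal.ofReal (Real.exp (-((1 - θ) * lam₁)) * ((1 - θ) * lam₁) ^ k / Nat.factorial k))
    (hY₂ : ∀ k : ℕ, μ {ω | Y₂ ω = k}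
      = ENNReal.ofReal (Real.exp (-((1 - θ) * lam₂)) * ((1 - θ) * lam₂) ^ k / Nat.factorial k))
    (hU : Measure.map U μ = volume.restrict (Set.Ioo (0 : ℝ) 1))
    (hind₁ : IndepFun W (fun ω => (Y₁ ω, Y₂ ω, U ω)) μ)
    (hind₂ : IndepFun Y₁ (fun ω => (Y₂ ω, U ω)) μ)
    (hind₃ : IndepFun Y₂ U μ)
    (W' : Ω' → ℕ) (Y₁' Y₂' : Ω' → ℕ) (U' : Ω' → ℝ)
    (hWm' : Measurable W') (hY₁m' : Measurable Y₁') (hY₂m' : Measurable Y₂')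
    (hUm' : Measurable U')
    (hW01' : ∀ ω, W' ω = 0 ∨ W' ω = 1)
    (hW1' : μ' {ω | W' ω = 1} = ENNReal.ofReal (1 - φ))
    (hY₁' : ∀ k : ℕ, μ' {ω | Y₁' ω = k}
      = ENNReal.ofReal (Real.exp (-((1 - θ') * lam₁)) * ((1 - θ') * lam₁) ^ k / Nat.factorial k))
    (hY₂' : ∀ k : ℕ, μ' {ω | Y₂' ω = k}
      = ENNReal.ofReal (Real.exp (-((1 - θ') * lam₂)) * ((1 - θ') * lam₂) ^ k / Nat.factorial k))
    (hU' : Measure.map U' μ' = volume.restrict (Set.Ioo (0 : ℝ) 1))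
    (hind₁' : IndepFun W' (fun ω => (Y₁' ω, Y₂' ω, U' ω)) μ')
    (hind₂' : IndepFun Y₁' (fun ω => (Y₂' ω, U' ω)) μ')
    (hind₃' : IndepFun Y₂' U' μ') :
    ∀ x₁ x₂ : ℕ,
      μ {ω | W ω * (Y₁ ω + poissonQuantile (θ * lam₁) (U ω)) ≤ x₁ ∧
             W ω * (Y₂ ω + poissonQuantile (θ * lam₂) (U ω)) ≤ x₂}
      ≤ μ' {ω | W' ω * (Y₁' ω + poissonQuantile (θ' * lam₁) (U' ω)) ≤ x₁ ∧
                W' ω * (Y₂' ω + poissonQuantile (θ' * lam₂) (U' ω)) ≤ x₂} := by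
  intro x₁ x₂
  rw [BZIP.model_measure μ lam₁ lam₂ φ θ hlam₁ hlam₂ hφ hθ W Y₁ Y₂ U hWm hY₁m hY₂m hUm hW01
      hW1 hY₁ hY₂ hU hind₁ hind₂ hind₃ x₁ x₂,
    BZIP.model_measure μ' lam₁ lam₂ φ θ' hlam₁ hlam₂ hφ hθ' W' Y₁' Y₂' U' hWm' hY₁m' hY₂m' hUm'
      hW01' hW1' hY₁' hY₂' hU' hind₁' hind₂' hind₃' x₁ x₂]
  apply add_le_add_right
  apply mul_le_mul_right
  have e1 : (1 - θ) * lam₁ = (θ' - θ) * lam₁ + (1 - θ') * lam₁ := by ring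
  have e2 : (1 - θ) * lam₂ = (θ' - θ) * lam₂ + (1 - θ') * lam₂ := by ring
  have e3 : θ' * lam₁ = (θ' - θ) * lam₁ + θ * lam₁ := by ring
  have e4 : θ' * lam₂ = (θ' - θ) * lam₂ + θ * lam₂ := by ring
  rw [e1, e2, e3, e4]
  obtain ⟨hθ'0, hθ'1⟩ := hθ'
  obtain ⟨hθ0, hθ1⟩ := hθ
  exact BZIP.Titer_mono (by nlinarith) (by nlinarith) (by positivity) (by positivity)
    (by nlinarith) (by nlinarith) x₁ x₂
end

section
/- Fix λ₁, λ₂ > 0 and φ ∈ (0,1). For θ ∈ (0,1), let H⁻_θ denote the joint distribution function of the pair (X₁, X₂) = (W·T₁, W·T₂), where W ~ Bernoulli(1 − φ) is independent of (T₁, T₂) = (Y₁ + G_{θλ₁}^{−1}(U), Y₂ + G_{θλ₂}^{−1}(1 − U)), with Y₁ ~ Poisson((1 − θ)λ₁), Y₂ ~ Poisson((1 − θ)λ₂), U ~ Uniform(0,1), and Y₁, Y₂, U mutually independent of each other and of W. If θ < θ′ then for all x₁, x₂ ∈ ℕ, H⁻_{θ′}(x₁, x₂) ≤ H⁻_θ(x₁,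 x₂); i.e., the model with parameter θ′ is smaller in the positive quadrant dependence ordering than the model with parameter θ. -/
open MeasureTheory ProbabilityTheory

noncomputable def ppmf (m : ℝ) (k : ℕ) : ℝ := Real.exp (-m) * m ^ k / Nat.factorial k

noncomputable def pcdf (m : ℝ) (k : ℕ) : ℝ := ∑ i ∈ Finset.range (k + 1), ppmf m i

lemma ppmf_nonneg {m : ℝ} (hm : 0 ≤ m) (k : ℕ) : 0 ≤ ppmf m k := by
  unfold ppmf; positivity

lemma pcdf_nonneg {m : ℝ} (hm : 0 ≤ m) (k : ℕ) : 0 ≤ pcdf m k :=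
  Finset.sum_nonneg fun i _ => ppmf_nonneg hm i

lemma pcdf_mono {m : ℝ} (hm : 0 ≤ m) {k k' : ℕ} (h : k ≤ k') : pcdf m k ≤ pcdf m k' := by
  apply Finset.sum_le_sum_of_subset_of_nonneg
  · exact Finset.range_subset_range.mpr (by omega)
  · intro i _ _; exact ppmf_nonneg hm i

lemma poissonCDF_natCast (m : ℝ) (k : ℕ) : poissonCDF m (k : ℤ) = pcdf m k := by
  unfold poissonCDF pcdf ppmf
  rw [if_neg (by omega : ¬((k : ℤ) < 0))]
  simp

lemma exists_pcdf_ge {m : ℝ} (hm : 0 ≤ m) {u : ℝ} (hu : u < 1) : ∃ k, u ≤ pcdf m k := by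
  have hsum : HasSum (fun n : ℕ => m ^ n / Nat.factorial n) (Real.exp m) := by
    rw [Real.exp_eq_exp_ℝ]
    exact NormedSpace.expSeries_div_hasSum_exp m
  have htend : Filter.Tendsto (fun k : ℕ => pcdf m k) Filter.atTop (nhds 1) := by
    have h1 : Filter.Tendsto (fun n : ℕ => ∑ i ∈ Finset.range n, m ^ i / Nat.factorial i)
        Filter.atTop (nhds (Real.exp m)) := hsum.tendsto_sum_nat
    have h2 : Filter.Tendsto (fun k : ℕ => ∑ i ∈ Finset.range (k + 1), m ^ i / Nat.factorial i)
        Filter.atTop (nhds (Real.exp m)) := h1.comp (Filter.tendsto_add_atTop_nat 1)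
    have h3 : Filter.Tendsto (fun k : ℕ =>
        Real.exp (-m) * ∑ i ∈ Finset.range (k + 1), m ^ i / Nat.factorial i)
        Filter.atTop (nhds (Real.exp (-m) * Real.exp m)) := h2.const_mul _
    rw [← Real.exp_add, neg_add_cancel, Real.exp_zero] at h3
    refine h3.congr fun k => ?_
    rw [Finset.mul_sum, pcdf]
    exact Finset.sum_congr rfl fun i _ => by rw [ppmf, mul_div_assoc]
  have := htend.eventually_const_le hu
  rcases this.exists with ⟨k, hk⟩
  exact ⟨k, hk⟩

lemma quantile_le_iff {m : ℝ} (hm : 0 ≤ m) {u : ℝ} (hu : u < 1) (k : ℕ) :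
    poissonQuantile m u ≤ k ↔ u ≤ pcdf m k := by
  constructor
  · intro h
    obtain ⟨n, hn⟩ := exists_pcdf_ge hm hu
    have hne : {j : ℕ | u ≤ poissonCDF m j}.Nonempty :=
      ⟨n, by simp only [Set.mem_setOf_eq, poissonCDF_natCast]; exact hn⟩
    have hmem := Nat.sInf_mem hne
    simp only [Set.mem_setOf_eq, poissonCDF_natCast] at hmem
    exact hmem.trans (pcdf_mono hm h)
  · intro h
    exact Nat.sInf_le (by simp only [Set.mem_setOf_eq, poissonCDF_natCast]; exact h)

lemma quantile_sublevel {m : ℝ} (hm : 0 ≤ m) (n : ℕ) :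
    {u : ℝ | poissonQuantile m u ≤ n}
      = Set.Iic (pcdf m n) ∪ ⋂ k : ℕ, Set.Ioi (pcdf m k) := by
  ext u
  simp only [Set.mem_setOf_eq, Set.mem_union, Set.mem_Iic, Set.mem_iInter, Set.mem_Ioi]
  constructor
  · intro h
    by_cases hne : {j : ℕ | u ≤ poissonCDF m j}.Nonempty
    · left
      have hmem := Nat.sInf_mem hne
      simp only [Set.mem_setOf_eq, poissonCDF_natCast] at hmem
      exact hmem.trans (pcdf_mono hm h)
    · right
      intro k
      by_contra hk
      exact hne ⟨k, by simp only [Set.mem_setOf_eq, poissonCDF_natCast]; linarith⟩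
  · rintro (h | h)
    · exact Nat.sInf_le (by simp only [Set.mem_setOf_eq, poissonCDF_natCast]; exact h)
    · have : {j : ℕ | u ≤ poissonCDF m j} = ∅ := by
        ext j
        simp only [Set.mem_setOf_eq, poissonCDF_natCast, Set.mem_empty_iff_false, iff_false,
          not_le]
        exact h j
      rw [poissonQuantile, this, Nat.sInf_empty]
      exact Nat.zero_le n

lemma measurable_quantile {m : ℝ} (hm : 0 ≤ m) : Measurable (poissonQuantile m) := by
  have hsub : ∀ n : ℕ, MeasurableSet {u : ℝ | poissonQuantile m u ≤ n} := by
    intro n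
    rw [quantile_sublevel hm]
    exact measurableSet_Iic.union (MeasurableSet.iInter fun k => measurableSet_Ioi)
  apply measurable_to_countable'
  intro n
  cases n with
  | zero =>
    have : (poissonQuantile m) ⁻¹' {0} = {u : ℝ | poissonQuantile m u ≤ 0} := by
      ext u; simp [Nat.le_zero]
    rw [this]; exact hsub 0
  | succ n =>
    have : (poissonQuantile m) ⁻¹' {n + 1}
        = {u : ℝ | poissonQuantile m u ≤ n + 1} \ {u : ℝ | poissonQuantile m u ≤ n} := by
      ext u; simp only [Set.mem_preimage, Set.mem_singleton_iff, Set.mem_diff,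
        Set.mem_setOf_eq, not_le]
      omega
    rw [this]; exact (hsub (n + 1)).diff (hsub n)

lemma pcdf_le_one {m : ℝ} (hm : 0 ≤ m) (k : ℕ) : pcdf m k ≤ 1 := by
  have h1 : pcdf m k = Real.exp (-m) * ∑ i ∈ Finset.range (k + 1), m ^ i / Nat.factorial i := by
    rw [Finset.mul_sum]; exact Finset.sum_congr rfl fun i _ => by rw [ppmf, mul_div_assoc]
  have h2 := Real.sum_le_exp_of_nonneg hm (k + 1)
  calc pcdf m k ≤ Real.exp (-m) * Real.exp m := by
        rw [h1]; exact mul_le_mul_of_nonneg_left h2 (Real.exp_pos _).le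
    _ = 1 := by rw [← Real.exp_add]; simp

lemma vol_I {m₁ m₂ : ℝ} (hm₁ : 0 ≤ m₁) (hm₂ : 0 ≤ m₂) (k₁ k₂ : ℕ) :
    volume ({u : ℝ | poissonQuantile m₁ u ≤ k₁ ∧ poissonQuantile m₂ (1 - u) ≤ k₂}
        ∩ Set.Ioo 0 1)
      = ENNReal.ofReal (pcdf m₁ k₁ + pcdf m₂ k₂ - 1) := by
  set a := pcdf m₁ k₁ with ha
  set b := pcdf m₂ k₂ with hb
  have ha0 : 0 ≤ a := pcdf_nonneg hm₁ k₁
  have ha1 : a ≤ 1 := pcdf_le_one hm₁ k₁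
  have hb0 : 0 ≤ b := pcdf_nonneg hm₂ k₂
  have hb1 : b ≤ 1 := pcdf_le_one hm₂ k₂
  set S := {u : ℝ | poissonQuantile m₁ u ≤ k₁ ∧ poissonQuantile m₂ (1 - u) ≤ k₂}
    ∩ Set.Ioo 0 1 with hS
  have hsub1 : Set.Ioo (1 - b) a ⊆ S := by
    intro u hu
    obtain ⟨hu1, hu2⟩ := hu
    have hu01 : u ∈ Set.Ioo (0 : ℝ) 1 := ⟨by linarith, by linarith⟩
    refine ⟨⟨?_, ?_⟩, hu01⟩
    · exact (quantile_le_iff hm₁ (by linarith) k₁).mpr (by linarith)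
    · exact (quantile_le_iff hm₂ (by linarith : (1 : ℝ) - u < 1) k₂).mpr (by linarith)
  have hsub2 : S ⊆ Set.Icc (1 - b) a := by
    intro u hu
    obtain ⟨⟨h1, h2⟩, hu0, hu1⟩ := hu
    have q1 := (quantile_le_iff hm₁ hu1 k₁).mp h1
    have q2 := (quantile_le_iff hm₂ (by linarith : (1 : ℝ) - u < 1) k₂).mp h2
    exact ⟨by linarith, by linarith⟩
  have hvol_le := measure_mono (μ := volume) hsub2
  have hvol_ge := measure_mono (μ := volume) hsub1
  rw [Real.volume_Icc] at hvol_le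
  rw [Real.volume_Ioo] at hvol_ge
  have heq : a - (1 - b) = a + b - 1 := by ring
  rw [heq] at hvol_le hvol_ge
  exact le_antisymm hvol_le hvol_ge

lemma ofReal_max0 (c : ℝ) : ENNReal.ofReal (max 0 c) = ENNReal.ofReal c := by
  rcases le_total c 0 with h | h
  · rw [max_eq_left h, ENNReal.ofReal_zero, Eq.comm, ENNReal.ofReal_eq_zero]
    exact h
  · rw [max_eq_right h]

noncomputable def Sgen (ν₁ m₁ ν₂ m₂ : ℝ) (x₁ x₂ : ℕ) : ℝ :=
  ∑ j₁ ∈ Finset.range (x₁ + 1), ∑ j₂ ∈ Finset.range (x₂ + 1),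
    ppmf ν₁ j₁ * (ppmf ν₂ j₂ * max 0 (pcdf m₁ (x₁ - j₁) + pcdf m₂ (x₂ - j₂) - 1))

noncomputable def Sval (θ lam₁ lam₂ : ℝ) (x₁ x₂ : ℕ) : ℝ :=
  Sgen ((1 - θ) * lam₁) (θ * lam₁) ((1 - θ) * lam₂) (θ * lam₂) x₁ x₂

lemma Sgen_nonneg {ν₁ m₁ ν₂ m₂ : ℝ} (h1 : 0 ≤ ν₁) (h2 : 0 ≤ ν₂) (x₁ x₂ : ℕ) :
    0 ≤ Sgen ν₁ m₁ ν₂ m₂ x₁ x₂ :=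
  Finset.sum_nonneg fun j₁ _ => Finset.sum_nonneg fun j₂ _ =>
    mul_nonneg (ppmf_nonneg h1 j₁) (mul_nonneg (ppmf_nonneg h2 j₂) (le_max_left _ _))


lemma ppmf_conv (a b : ℝ) (n : ℕ) :
    ∑ i ∈ Finset.range (n + 1), ppmf a i * ppmf b (n - i) = ppmf (a + b) n := by
  unfold ppmf
  rw [show Real.exp (-(a+b)) = Real.exp (-a) * Real.exp (-b) by rw [← Real.exp_add]; ring_nf]
  rw [add_pow, Finset.mul_sum, Finset.sum_div]
  refine Finset.sum_congr rfl fun i hi => ?_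
  have hin : i ≤ n := Nat.lt_succ_iff.mp (Finset.mem_range.mp hi)
  have keyn : Nat.factorial i * Nat.factorial (n-i) * Nat.choose n i = Nat.factorial n := by
    rw [← Nat.choose_mul_factorial_mul_factorial hin]; ring
  have key : (Nat.factorial i : ℝ) * (Nat.factorial (n - i)) * (Nat.choose n i) = Nat.factorial n := by
    exact_mod_cast congrArg (Nat.cast (R := ℝ)) keyn
  have hi' : (Nat.factorial i : ℝ) ≠ 0 := by positivity
  have hni : (Nat.factorial (n - i) : ℝ) ≠ 0 := by positivity
  field_simp
  rw [← key]; ring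

theorem tri {M : Type*} [AddCommMonoid M] (x : ℕ) (f : ℕ → ℕ → M) :
    ∑ j ∈ Finset.range (x + 1), ∑ d ∈ Finset.range (x - j + 1), f j d
      = ∑ n ∈ Finset.range (x + 1), ∑ j ∈ Finset.range (n + 1), f j (n - j) := by
  rw [Finset.sum_sigma', Finset.sum_sigma']
  refine Finset.sum_nbij' (fun p => ⟨p.1 + p.2, p.1⟩) (fun p => ⟨p.2, p.1 - p.2⟩)
    ?_ ?_ ?_ ?_ ?_
  · rintro ⟨a, b⟩ h
    simp only [Finset.mem_sigma, Finset.mem_range] at h ⊢; omega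
  · rintro ⟨a, b⟩ h
    simp only [Finset.mem_sigma, Finset.mem_range] at h ⊢; omega
  · rintro ⟨a, b⟩ h
    simp only [Finset.mem_sigma, Finset.mem_range] at h
    simp only [Nat.add_sub_cancel_left]
  · rintro ⟨a, b⟩ h
    simp only [Finset.mem_sigma, Finset.mem_range] at h
    simp only [show b + (a - b) = a from by omega]
  · rintro ⟨a, b⟩ h
    simp only [Finset.mem_sigma, Finset.mem_range] at h
    simp only [Nat.add_sub_cancel_left]

lemma pcdf_conv (a b : ℝ) (k : ℕ) :
    pcdf (a + b) k = ∑ j ∈ Finset.range (k + 1), ppmf a j * pcdf b (k - j) := by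
  have h := tri k (fun j d => ppmf a j * ppmf b d)
  calc pcdf (a + b) k = ∑ n ∈ Finset.range (k + 1), ∑ i ∈ Finset.range (n + 1),
        ppmf a i * ppmf b (n - i) := by
        unfold pcdf; exact Finset.sum_congr rfl fun n _ => (ppmf_conv a b n).symm
    _ = ∑ j ∈ Finset.range (k + 1), ∑ d ∈ Finset.range (k - j + 1), ppmf a j * ppmf b d := h.symm
    _ = ∑ j ∈ Finset.range (k + 1), ppmf a j * pcdf b (k - j) := by
        refine Finset.sum_congr rfl fun j _ => ?_
        rw [pcdf, Finset.mul_sum]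

lemma max_sub_le {s : Finset ℕ} (p a : ℕ → ℝ) (c : ℝ) (hc : 0 ≤ c)
    (hp : ∀ d ∈ s, 0 ≤ p d) (hs : ∑ d ∈ s, p d ≤ 1) :
    max 0 (∑ d ∈ s, p d * a d - c) ≤ ∑ d ∈ s, p d * max 0 (a d - c) := by
  have hterm : ∀ d ∈ s, 0 ≤ p d * max 0 (a d - c) :=
    fun d hd => mul_nonneg (hp d hd) (le_max_left _ _)
  refine max_le (Finset.sum_nonneg hterm) ?_
  have h1 : ∑ d ∈ s, p d * a d ≤ ∑ d ∈ s, p d * (max 0 (a d - c) + c) := by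
    refine Finset.sum_le_sum fun d hd => ?_
    refine mul_le_mul_of_nonneg_left ?_ (hp d hd)
    have := le_max_right 0 (a d - c); linarith
  have h2 : ∑ d ∈ s, p d * (max 0 (a d - c) + c)
      = ∑ d ∈ s, p d * max 0 (a d - c) + c * ∑ d ∈ s, p d := by
    rw [Finset.mul_sum, ← Finset.sum_add_distrib]
    exact Finset.sum_congr rfl fun d _ => by ring
  nlinarith [hs, hc]

lemma mono_one (x : ℕ) (c ν m δ : ℝ) (hc : 0 ≤ c) (hν : 0 ≤ ν) (hm : 0 ≤ m) (hδ : 0 ≤ δ) :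
    ∑ j ∈ Finset.range (x + 1), ppmf ν j * max 0 (pcdf (m + δ) (x - j) - c)
      ≤ ∑ n ∈ Finset.range (x + 1), ppmf (ν + δ) n * max 0 (pcdf m (x - n) - c) := by
  have step1 : ∀ j ∈ Finset.range (x + 1),
      ppmf ν j * max 0 (pcdf (m + δ) (x - j) - c)
        ≤ ∑ d ∈ Finset.range (x - j + 1), ppmf ν j * ppmf δ d * max 0 (pcdf m (x - j - d) - c) := by
    intro j _
    have hconv : pcdf (m + δ) (x - j) = pcdf (δ + m) (x - j) := by rw [add_comm]
    rw [hconv, pcdf_conv]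
    have hmax := max_sub_le (s := Finset.range (x - j + 1)) (fun d => ppmf δ d)
      (fun d => pcdf m (x - j - d)) c hc (fun d _ => ppmf_nonneg hδ d)
      (by rw [← pcdf]; exact pcdf_le_one hδ _)
    calc ppmf ν j * max 0 (∑ d ∈ Finset.range (x - j + 1), ppmf δ d * pcdf m (x - j - d) - c)
        ≤ ppmf ν j * ∑ d ∈ Finset.range (x - j + 1), ppmf δ d * max 0 (pcdf m (x - j - d) - c) :=
          mul_le_mul_of_nonneg_left hmax (ppmf_nonneg hν j)
      _ = ∑ d ∈ Finset.range (x - j + 1), ppmf ν j * ppmf δ d * max 0 (pcdf m (x - j - d) - c) := by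
          rw [Finset.mul_sum]; exact Finset.sum_congr rfl fun d _ => by ring
  calc ∑ j ∈ Finset.range (x + 1), ppmf ν j * max 0 (pcdf (m + δ) (x - j) - c)
      ≤ ∑ j ∈ Finset.range (x + 1), ∑ d ∈ Finset.range (x - j + 1),
          ppmf ν j * ppmf δ d * max 0 (pcdf m (x - j - d) - c) := Finset.sum_le_sum step1
    _ = ∑ n ∈ Finset.range (x + 1), ∑ j ∈ Finset.range (n + 1),
          ppmf ν j * ppmf δ (n - j) * max 0 (pcdf m (x - j - (n - j)) - c) :=
        tri x (fun j d => ppmf ν j * ppmf δ d * max 0 (pcdf m (x - j - d) - c))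
    _ = ∑ n ∈ Finset.range (x + 1), ppmf (ν + δ) n * max 0 (pcdf m (x - n) - c) := by
        refine Finset.sum_congr rfl fun n hn => ?_
        have hnx : n ≤ x := Nat.lt_succ_iff.mp (Finset.mem_range.mp hn)
        rw [← ppmf_conv ν δ n, Finset.sum_mul]
        refine Finset.sum_congr rfl fun j hj => ?_
        have hjn : j ≤ n := Nat.lt_succ_iff.mp (Finset.mem_range.mp hj)
        have : x - j - (n - j) = x - n := by omega
        rw [this]

lemma Sgen_comm (ν₁ m₁ ν₂ m₂ : ℝ) (x₁ x₂ : ℕ) :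
    Sgen ν₁ m₁ ν₂ m₂ x₁ x₂ = Sgen ν₂ m₂ ν₁ m₁ x₂ x₁ := by
  unfold Sgen
  rw [Finset.sum_comm]
  refine Finset.sum_congr rfl fun j₂ _ => Finset.sum_congr rfl fun j₁ _ => ?_
  rw [show pcdf m₁ (x₁ - j₁) + pcdf m₂ (x₂ - j₂) - 1
      = pcdf m₂ (x₂ - j₂) + pcdf m₁ (x₁ - j₁) - 1 from by ring]
  ring

lemma Sgen_step (ν₁ m₁ ν₂ m₂ δ : ℝ) (x₁ x₂ : ℕ)
    (hν₁ : 0 ≤ ν₁) (hm₁ : 0 ≤ m₁) (hν₂ : 0 ≤ ν₂) (hm₂ : 0 ≤ m₂) (hδ : 0 ≤ δ) :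
    Sgen ν₁ (m₁ + δ) ν₂ m₂ x₁ x₂ ≤ Sgen (ν₁ + δ) m₁ ν₂ m₂ x₁ x₂ := by
  unfold Sgen
  rw [Finset.sum_comm, Finset.sum_comm (s := Finset.range (x₁ + 1))]
  refine Finset.sum_le_sum fun j₂ _ => ?_
  set b := pcdf m₂ (x₂ - j₂) with hb
  have hc : 0 ≤ 1 - b := by have := pcdf_le_one hm₂ (x₂ - j₂); linarith
  have key := mono_one x₁ (1 - b) ν₁ m₁ δ hc hν₁ hm₁ hδ
  calc ∑ j₁ ∈ Finset.range (x₁ + 1),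
        ppmf ν₁ j₁ * (ppmf ν₂ j₂ * max 0 (pcdf (m₁ + δ) (x₁ - j₁) + b - 1))
      = ppmf ν₂ j₂ * ∑ j₁ ∈ Finset.range (x₁ + 1),
          ppmf ν₁ j₁ * max 0 (pcdf (m₁ + δ) (x₁ - j₁) - (1 - b)) := by
        rw [Finset.mul_sum]
        refine Finset.sum_congr rfl fun j₁ _ => ?_
        rw [show pcdf (m₁ + δ) (x₁ - j₁) + b - 1 = pcdf (m₁ + δ) (x₁ - j₁) - (1 - b) from by ring]
        ring
    _ ≤ ppmf ν₂ j₂ * ∑ n ∈ Finset.range (x₁ + 1),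
          ppmf (ν₁ + δ) n * max 0 (pcdf m₁ (x₁ - n) - (1 - b)) :=
        mul_le_mul_of_nonneg_left key (ppmf_nonneg hν₂ j₂)
    _ = ∑ j₁ ∈ Finset.range (x₁ + 1),
          ppmf (ν₁ + δ) j₁ * (ppmf ν₂ j₂ * max 0 (pcdf m₁ (x₁ - j₁) + b - 1)) := by
        rw [Finset.mul_sum]
        refine Finset.sum_congr rfl fun j₁ _ => ?_
        rw [show pcdf m₁ (x₁ - j₁) + b - 1 = pcdf m₁ (x₁ - j₁) - (1 - b) from by ring]
        ring

lemma Sval_mono (lam₁ lam₂ θ θ' : ℝ) (hlam₁ : 0 < lam₁) (hlam₂ : 0 < lam₂)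
    (hθ : θ ∈ Set.Ioo (0 : ℝ) 1) (hθ' : θ' ∈ Set.Ioo (0 : ℝ) 1) (hlt : θ < θ') (x₁ x₂ : ℕ) :
    Sval θ' lam₁ lam₂ x₁ x₂ ≤ Sval θ lam₁ lam₂ x₁ x₂ := by
  obtain ⟨hθ0, hθ1⟩ := hθ
  obtain ⟨hθ'0, hθ'1⟩ := hθ'
  have hδ₁ : 0 ≤ (θ' - θ) * lam₁ := mul_nonneg (by linarith) hlam₁.le
  have hδ₂ : 0 ≤ (θ' - θ) * lam₂ := mul_nonneg (by linarith) hlam₂.le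
  have hν₁' : 0 ≤ (1 - θ') * lam₁ := mul_nonneg (by linarith) hlam₁.le
  have hν₂' : 0 ≤ (1 - θ') * lam₂ := mul_nonneg (by linarith) hlam₂.le
  have hν₁ : 0 ≤ (1 - θ) * lam₁ := mul_nonneg (by linarith) hlam₁.le
  have hν₂ : 0 ≤ (1 - θ) * lam₂ := mul_nonneg (by linarith) hlam₂.le
  have hm₁ : 0 ≤ θ * lam₁ := mul_nonneg (by linarith) hlam₁.le
  have hm₂ : 0 ≤ θ * lam₂ := mul_nonneg (by linarith) hlam₂.le
  have hm₂' : 0 ≤ θ' * lam₂ := mul_nonneg (by linarith) hlam₂.le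
  have step1 : Sval θ' lam₁ lam₂ x₁ x₂
      ≤ Sgen ((1 - θ) * lam₁) (θ * lam₁) ((1 - θ') * lam₂) (θ' * lam₂) x₁ x₂ := by
    have h := Sgen_step ((1 - θ') * lam₁) (θ * lam₁) ((1 - θ') * lam₂) (θ' * lam₂)
      ((θ' - θ) * lam₁) x₁ x₂ hν₁' hm₁ hν₂' hm₂' hδ₁
    rw [show θ * lam₁ + (θ' - θ) * lam₁ = θ' * lam₁ from by ring,
        show (1 - θ') * lam₁ + (θ' - θ) * lam₁ = (1 - θ) * lam₁ from by ring] at h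
    exact h
  have step2 : Sgen ((1 - θ) * lam₁) (θ * lam₁) ((1 - θ') * lam₂) (θ' * lam₂) x₁ x₂
      ≤ Sval θ lam₁ lam₂ x₁ x₂ := by
    rw [Sgen_comm, Sval, Sgen_comm ((1 - θ) * lam₁)]
    have h := Sgen_step ((1 - θ') * lam₂) (θ * lam₂) ((1 - θ) * lam₁) (θ * lam₁)
      ((θ' - θ) * lam₂) x₂ x₁ hν₂' hm₂ hν₁ hm₁ hδ₂
    rw [show θ * lam₂ + (θ' - θ) * lam₂ = θ' * lam₂ from by ring,
        show (1 - θ') * lam₂ + (θ' - θ) * lam₂ = (1 - θ) * lam₂ from by ring] at h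
    exact h
  exact step1.trans step2

lemma model {Ω : Type*} [MeasurableSpace Ω] (μ : Measure Ω) [IsProbabilityMeasure μ]
    (lam₁ lam₂ φ θ : ℝ) (hlam₁ : 0 < lam₁) (hlam₂ : 0 < lam₂)
    (hφ : φ ∈ Set.Ioo (0 : ℝ) 1) (hθ : θ ∈ Set.Ioo (0 : ℝ) 1)
    (W : Ω → ℕ) (Y₁ Y₂ : Ω → ℕ) (U : Ω → ℝ)
    (hWm : Measurable W) (hY₁m : Measurable Y₁) (hY₂m : Measurable Y₂) (hUm : Measurable U)
    (hW01 : ∀ ω, W ω = 0 ∨ W ω = 1)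
    (hW1 : μ {ω | W ω = 1} = ENNReal.ofReal (1 - φ))
    (hY₁ : ∀ k : ℕ, μ {ω | Y₁ ω = k}
      = ENNReal.ofReal (Real.exp (-((1 - θ) * lam₁)) * ((1 - θ) * lam₁) ^ k / Nat.factorial k))
    (hY₂ : ∀ k : ℕ, μ {ω | Y₂ ω = k}
      = ENNReal.ofReal (Real.exp (-((1 - θ) * lam₂)) * ((1 - θ) * lam₂) ^ k / Nat.factorial k))
    (hU : Measure.map U μ = volume.restrict (Set.Ioo (0 : ℝ) 1))
    (hind₁ : IndepFun W (fun ω => (Y₁ ω, Y₂ ω, U ω)) μ)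
    (hind₂ : IndepFun Y₁ (fun ω => (Y₂ ω, U ω)) μ)
    (hind₃ : IndepFun Y₂ U μ) (x₁ x₂ : ℕ) :
    μ {ω | W ω * (Y₁ ω + poissonQuantile (θ * lam₁) (U ω)) ≤ x₁ ∧
           W ω * (Y₂ ω + poissonQuantile (θ * lam₂) (1 - U ω)) ≤ x₂}
      = ENNReal.ofReal (φ + (1 - φ) * Sval θ lam₁ lam₂ x₁ x₂) := by
  obtain ⟨hφ0, hφ1⟩ := hφ
  obtain ⟨hθ0, hθ1⟩ := hθ
  have hm₁ : 0 ≤ θ * lam₁ := mul_nonneg hθ0.le hlam₁.le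
  have hm₂ : 0 ≤ θ * lam₂ := mul_nonneg hθ0.le hlam₂.le
  have hν₁ : 0 ≤ (1 - θ) * lam₁ := mul_nonneg (by linarith) hlam₁.le
  have hν₂ : 0 ≤ (1 - θ) * lam₂ := mul_nonneg (by linarith) hlam₂.le
  set m₁ := θ * lam₁
  set m₂ := θ * lam₂
  set ν₁ := (1 - θ) * lam₁
  set ν₂ := (1 - θ) * lam₂
  have hQ₁ : Measurable (poissonQuantile m₁) := measurable_quantile hm₁
  have hQ₂ : Measurable (poissonQuantile m₂) := measurable_quantile hm₂
  -- the inner interval sets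
  set I : ℕ → ℕ → Set ℝ := fun j₁ j₂ =>
    {u : ℝ | poissonQuantile m₁ u ≤ x₁ - j₁ ∧ poissonQuantile m₂ (1 - u) ≤ x₂ - j₂} with hIdef
  have hQ₂' : Measurable fun u : ℝ => poissonQuantile m₂ (1 - u) :=
    hQ₂.comp (measurable_const.sub measurable_id)
  have hI : ∀ j₁ j₂ : ℕ, MeasurableSet (I j₁ j₂) := by
    intro j₁ j₂
    exact (hQ₁ (measurableSet_Iic : MeasurableSet (Set.Iic (x₁ - j₁)))).inter
      (hQ₂' (measurableSet_Iic : MeasurableSet (Set.Iic (x₂ - j₂))))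
  -- the set B
  set g : Ω → ℕ × ℕ × ℝ := fun ω => (Y₁ ω, Y₂ ω, U ω) with hgdef
  have hgm : Measurable g := hY₁m.prodMk (hY₂m.prodMk hUm)
  set B : Set (ℕ × ℕ × ℝ) := {p | p.1 + poissonQuantile m₁ p.2.2 ≤ x₁ ∧
    p.2.1 + poissonQuantile m₂ (1 - p.2.2) ≤ x₂} with hBdef
  have hBm : MeasurableSet B := by
    have hf1 : Measurable fun p : ℕ × ℕ × ℝ => p.1 + poissonQuantile m₁ p.2.2 :=
      measurable_fst.add (hQ₁.comp measurable_snd.snd)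
    have hf2 : Measurable fun p : ℕ × ℕ × ℝ => p.2.1 + poissonQuantile m₂ (1 - p.2.2) :=
      (measurable_fst.comp measurable_snd).add (hQ₂'.comp measurable_snd.snd)
    exact (hf1 (measurableSet_Iic : MeasurableSet (Set.Iic x₁))).inter
      (hf2 (measurableSet_Iic : MeasurableSet (Set.Iic x₂)))
  -- event decomposition
  have hEvent : {ω | W ω * (Y₁ ω + poissonQuantile m₁ (U ω)) ≤ x₁ ∧
      W ω * (Y₂ ω + poissonQuantile m₂ (1 - U ω)) ≤ x₂}
      = W ⁻¹' {0} ∪ (W ⁻¹' {1} ∩ g ⁻¹' B) := by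
    ext ω
    rcases hW01 ω with h | h <;>
      simp [h, hBdef, hgdef, Set.mem_setOf_eq]
  have hW1m : MeasurableSet (W ⁻¹' {1}) := hWm (measurableSet_singleton 1)
  have hdisj : Disjoint (W ⁻¹' {0}) (W ⁻¹' {1} ∩ g ⁻¹' B) := by
    rw [Set.disjoint_left]
    rintro ω h0 ⟨h1, -⟩
    simp only [Set.mem_preimage, Set.mem_singleton_iff] at h0 h1
    omega
  have hsplit : μ {ω | W ω * (Y₁ ω + poissonQuantile m₁ (U ω)) ≤ x₁ ∧
      W ω * (Y₂ ω + poissonQuantile m₂ (1 - U ω)) ≤ x₂}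
      = μ (W ⁻¹' {0}) + μ (W ⁻¹' {1} ∩ g ⁻¹' B) := by
    rw [hEvent]
    exact measure_union hdisj (hW1m.inter (hgm hBm))
  -- μ (W ⁻¹' {0}) = ofReal φ
  have hW1' : μ (W ⁻¹' {1}) = ENNReal.ofReal (1 - φ) := hW1
  have hW0 : μ (W ⁻¹' {0}) = ENNReal.ofReal φ := by
    have hcompl : W ⁻¹' {0} = (W ⁻¹' {1})ᶜ := by
      ext ω; rcases hW01 ω with h | h <;> simp [h]
    rw [hcompl, measure_compl hW1m (measure_ne_top μ _), measure_univ, hW1']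
    have : ENNReal.ofReal (1 - (1 - φ)) = 1 - ENNReal.ofReal (1 - φ) := by
      rw [ENNReal.ofReal_sub _ (by linarith), ENNReal.ofReal_one]
    rw [← this]
    norm_num
  -- independence of W
  have hWind : μ (W ⁻¹' {1} ∩ g ⁻¹' B) = μ (W ⁻¹' {1}) * μ (g ⁻¹' B) :=
    hind₁.measure_inter_preimage_eq_mul _ _ (measurableSet_singleton 1) hBm
  -- decompose g ⁻¹' B
  set g₂ : Ω → ℕ × ℝ := fun ω => (Y₂ ω, U ω) with hg₂def
  set C : ℕ × ℕ → Set Ω := fun p =>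
    Y₁ ⁻¹' {p.1} ∩ g₂ ⁻¹' (({p.2} : Set ℕ) ×ˢ I p.1 p.2) with hCdef
  have hdecomp : g ⁻¹' B
      = ⋃ p ∈ (Finset.range (x₁ + 1) ×ˢ Finset.range (x₂ + 1) : Finset (ℕ × ℕ)), C p := by
    ext ω
    simp only [Set.mem_preimage, hBdef, hgdef, Set.mem_setOf_eq, Set.mem_iUnion,
      Finset.mem_product, Finset.mem_range, hCdef, Set.mem_inter_iff, Set.mem_singleton_iff,
      hg₂def, Set.mem_prod, hIdef, exists_prop]
    constructor
    · rintro ⟨h1, h2⟩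
      exact ⟨(Y₁ ω, Y₂ ω), ⟨by omega, by omega⟩, rfl, rfl, by omega, by omega⟩
    · rintro ⟨p, ⟨hp1, hp2⟩, hy1, ⟨hy2, hq1, hq2⟩⟩
      omega
  have hCm : ∀ p : ℕ × ℕ, MeasurableSet (C p) := by
    intro p
    exact (hY₁m (measurableSet_singleton p.1)).inter
      ((hY₂m.prodMk hUm) ((measurableSet_singleton p.2).prod (hI p.1 p.2)))
  have hCdisj : Set.PairwiseDisjoint
      ↑(Finset.range (x₁ + 1) ×ˢ Finset.range (x₂ + 1) : Finset (ℕ × ℕ)) C := by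
    intro p _ q _ hpq
    rw [Function.onFun, Set.disjoint_left]
    rintro ω ⟨hp1, hp2⟩ ⟨hq1, hq2⟩
    simp only [Set.mem_preimage, Set.mem_singleton_iff, hg₂def, Set.mem_prod] at hp1 hp2 hq1 hq2
    exact hpq (Prod.ext (hp1.symm.trans hq1) (hp2.1.symm.trans hq2.1))
  have hsum : μ (g ⁻¹' B)
      = ∑ p ∈ (Finset.range (x₁ + 1) ×ˢ Finset.range (x₂ + 1) : Finset (ℕ × ℕ)), μ (C p) := by
    rw [hdecomp]
    exact measure_biUnion_finset hCdisj fun p _ => hCm p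
  -- compute μ (C p)
  have hCval : ∀ p : ℕ × ℕ, μ (C p)
      = ENNReal.ofReal (ppmf ν₁ p.1 * (ppmf ν₂ p.2 *
          max 0 (pcdf m₁ (x₁ - p.1) + pcdf m₂ (x₂ - p.2) - 1))) := by
    intro p
    have h1 : μ (C p) = μ (Y₁ ⁻¹' {p.1}) * μ (g₂ ⁻¹' (({p.2} : Set ℕ) ×ˢ I p.1 p.2)) :=
      hind₂.measure_inter_preimage_eq_mul _ _ (measurableSet_singleton p.1)
        ((measurableSet_singleton p.2).prod (hI p.1 p.2))
    have h2 : g₂ ⁻¹' (({p.2} : Set ℕ) ×ˢ I p.1 p.2) = Y₂ ⁻¹' {p.2} ∩ U ⁻¹' (I p.1 p.2) := by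
      ext ω
      simp only [hg₂def, Set.mem_preimage, Set.mem_prod, Set.mem_inter_iff,
        Set.mem_singleton_iff]
    have h3 : μ (Y₂ ⁻¹' {p.2} ∩ U ⁻¹' (I p.1 p.2))
        = μ (Y₂ ⁻¹' {p.2}) * μ (U ⁻¹' (I p.1 p.2)) :=
      hind₃.measure_inter_preimage_eq_mul _ _ (measurableSet_singleton p.2) (hI p.1 p.2)
    have h4 : μ (U ⁻¹' (I p.1 p.2))
        = ENNReal.ofReal (pcdf m₁ (x₁ - p.1) + pcdf m₂ (x₂ - p.2) - 1) := by
      rw [← Measure.map_apply hUm (hI p.1 p.2), hU, Measure.restrict_apply (hI p.1 p.2)]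
      exact vol_I hm₁ hm₂ (x₁ - p.1) (x₂ - p.2)
    have h5 : μ (Y₁ ⁻¹' {p.1}) = ENNReal.ofReal (ppmf ν₁ p.1) := hY₁ p.1
    have h6 : μ (Y₂ ⁻¹' {p.2}) = ENNReal.ofReal (ppmf ν₂ p.2) := hY₂ p.2
    rw [h1, h2, h3, h4, h5, h6]
    rw [← ofReal_max0 (pcdf m₁ (x₁ - p.1) + pcdf m₂ (x₂ - p.2) - 1)]
    rw [← ENNReal.ofReal_mul (ppmf_nonneg hν₂ p.2), ← ENNReal.ofReal_mul (ppmf_nonneg hν₁ p.1)]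
  -- sum to Sval
  have hSval : μ (g ⁻¹' B) = ENNReal.ofReal (Sval θ lam₁ lam₂ x₁ x₂) := by
    rw [hsum]
    have : Sval θ lam₁ lam₂ x₁ x₂
        = ∑ p ∈ (Finset.range (x₁ + 1) ×ˢ Finset.range (x₂ + 1) : Finset (ℕ × ℕ)),
            ppmf ν₁ p.1 * (ppmf ν₂ p.2 *
              max 0 (pcdf m₁ (x₁ - p.1) + pcdf m₂ (x₂ - p.2) - 1)) := by
      rw [Sval, Sgen, Finset.sum_product]
    rw [this, ENNReal.ofReal_sum_of_nonneg]
    · exact Finset.sum_congr rfl fun p _ => hCval p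
    · intro p _
      exact mul_nonneg (ppmf_nonneg hν₁ p.1)
        (mul_nonneg (ppmf_nonneg hν₂ p.2) (le_max_left _ _))
  -- assemble
  rw [hsplit, hW0, hWind, hW1', hSval]
  rw [← ENNReal.ofReal_mul (by linarith : (0:ℝ) ≤ 1 - φ)]
  have hSnn : 0 ≤ Sval θ lam₁ lam₂ x₁ x₂ := by
    unfold Sval; exact Sgen_nonneg hν₁ hν₂ x₁ x₂
  rw [← ENNReal.ofReal_add (by linarith : (0:ℝ) ≤ φ) (mul_nonneg (by linarith) hSnn)]


/-- PQD ordering in `θ` for the counter-monotonic-shock bivariate zero-inflated Poisson model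
`BZIP⁻(λ₁, λ₂, θ, φ)`: if `θ < θ'` then the joint CDF at parameter `θ'` is pointwise at most
the joint CDF at parameter `θ`. Each model is `(X₁, X₂) = (W T₁, W T₂)` with
`(T₁, T₂) = (Y₁ + G_{θλ₁}⁻¹(U), Y₂ + G_{θλ₂}⁻¹(1 − U))`, where `W ~ Bernoulli(1-φ)`,
`Y₁ ~ Poisson((1-θ)λ₁)`, `Y₂ ~ Poisson((1-θ)λ₂)`, `U ~ Uniform(0,1)`, all mutually
independent (expressed by the equivalent sequential conditions `W ⟂ (Y₁, Y₂, U)`,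
`Y₁ ⟂ (Y₂, U)`, `Y₂ ⟂ U`). -/
theorem stmt_16 {Ω Ω' : Type*} [MeasurableSpace Ω] [MeasurableSpace Ω']
    (μ : Measure Ω) (μ' : Measure Ω') [IsProbabilityMeasure μ] [IsProbabilityMeasure μ']
    (lam₁ lam₂ φ θ θ' : ℝ) (hlam₁ : 0 < lam₁) (hlam₂ : 0 < lam₂)
    (hφ : φ ∈ Set.Ioo (0 : ℝ) 1) (hθ : θ ∈ Set.Ioo (0 : ℝ) 1) (hθ' : θ' ∈ Set.Ioo (0 : ℝ) 1)
    (hlt : θ < θ')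
    (W : Ω → ℕ) (Y₁ Y₂ : Ω → ℕ) (U : Ω → ℝ)
    (hWm : Measurable W) (hY₁m : Measurable Y₁) (hY₂m : Measurable Y₂) (hUm : Measurable U)
    (hW01 : ∀ ω, W ω = 0 ∨ W ω = 1)
    (hW1 : μ {ω | W ω = 1} = ENNReal.ofReal (1 - φ))
    (hY₁ : ∀ k : ℕ, μ {ω | Y₁ ω = k}
      = ENNReal.ofReal (Real.exp (-((1 - θ) * lam₁)) * ((1 - θ) * lam₁) ^ k / Nat.factorial k))
    (hY₂ : ∀ k : ℕ, μ {ω | Y₂ ω = k}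
      = ENNReal.ofReal (Real.exp (-((1 - θ) * lam₂)) * ((1 - θ) * lam₂) ^ k / Nat.factorial k))
    (hU : Measure.map U μ = volume.restrict (Set.Ioo (0 : ℝ) 1))
    (hind₁ : IndepFun W (fun ω => (Y₁ ω, Y₂ ω, U ω)) μ)
    (hind₂ : IndepFun Y₁ (fun ω => (Y₂ ω, U ω)) μ)
    (hind₃ : IndepFun Y₂ U μ)
    (W' : Ω' → ℕ) (Y₁' Y₂' : Ω' → ℕ) (U' : Ω' → ℝ)
    (hWm' : Measurable W') (hY₁m' : Measurable Y₁') (hY₂m' : Measurable Y₂')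
    (hUm' : Measurable U')
    (hW01' : ∀ ω, W' ω = 0 ∨ W' ω = 1)
    (hW1' : μ' {ω | W' ω = 1} = ENNReal.ofReal (1 - φ))
    (hY₁' : ∀ k : ℕ, μ' {ω | Y₁' ω = k}
      = ENNReal.ofReal (Real.exp (-((1 - θ') * lam₁)) * ((1 - θ') * lam₁) ^ k / Nat.factorial k))
    (hY₂' : ∀ k : ℕ, μ' {ω | Y₂' ω = k}
      = ENNReal.ofReal (Real.exp (-((1 - θ') * lam₂)) * ((1 - θ') * lam₂) ^ k / Nat.factorial k))
    (hU' : Measure.map U' μ' = volume.restrict (Set.Ioo (0 : ℝ) 1))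
    (hind₁' : IndepFun W' (fun ω => (Y₁' ω, Y₂' ω, U' ω)) μ')
    (hind₂' : IndepFun Y₁' (fun ω => (Y₂' ω, U' ω)) μ')
    (hind₃' : IndepFun Y₂' U' μ') :
    ∀ x₁ x₂ : ℕ,
      μ' {ω | W' ω * (Y₁' ω + poissonQuantile (θ' * lam₁) (U' ω)) ≤ x₁ ∧
              W' ω * (Y₂' ω + poissonQuantile (θ' * lam₂) (1 - U' ω)) ≤ x₂}
      ≤ μ {ω | W ω * (Y₁ ω + poissonQuantile (θ * lam₁) (U ω)) ≤ x₁ ∧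
               W ω * (Y₂ ω + poissonQuantile (θ * lam₂) (1 - U ω)) ≤ x₂} := by
  intro x₁ x₂
  rw [model μ' lam₁ lam₂ φ θ' hlam₁ hlam₂ hφ hθ' W' Y₁' Y₂' U' hWm' hY₁m' hY₂m' hUm'
      hW01' hW1' hY₁' hY₂' hU' hind₁' hind₂' hind₃' x₁ x₂,
    model μ lam₁ lam₂ φ θ hlam₁ hlam₂ hφ hθ W Y₁ Y₂ U hWm hY₁m hY₂m hUm
      hW01 hW1 hY₁ hY₂ hU hind₁ hind₂ hind₃ x₁ x₂]
  apply ENNReal.ofReal_le_ofReal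
  have hS := Sval_mono lam₁ lam₂ θ θ' hlam₁ hlam₂ hθ hθ' hlt x₁ x₂
  have hφ1 : φ < 1 := hφ.2
  nlinarith [hS]
end

section
/- Let λ₁, λ₂ > 0 and φ ∈ (0,1). Let W ~ Bernoulli(1 − φ) be independent of the comonotonic pair (T₁, T₂) = (G_{λ₁}^{−1}(U), G_{λ₂}^{−1}(U)) with U ~ Uniform(0,1), and set (X₁, X₂) = (W·T₁, W·T₂). Then for all x₁, x₂ ∈ ℕ, P(X₁ ≤ x₁, X₂ ≤ x₂) = φ + (1 − φ) min{G_{λ₁}(x₁), G_{λ₂}(x₂)} = min{P(X₁ ≤ x₁), P(X₂ ≤ x₂)}; that is, at full shock strength the bivariate zero-inflated Poisson model attains the Fréchet–Hoeffding upper bound for zero-inflated Poisson margins with common inflation rate φ. -/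
open MeasureTheory ProbabilityTheory

lemma poissonCDF_natCast_s17 (m : ℝ) (x : ℕ) :
    poissonCDF m (x : ℤ) =
      ∑ i ∈ Finset.range (x + 1), Real.exp (-m) * m ^ i / Nat.factorial i := by
  simp [poissonCDF]

lemma poisson_hasSum (m : ℝ) :
    HasSum (fun i : ℕ => Real.exp (-m) * m ^ i / Nat.factorial i) 1 := by
  have h := (NormedSpace.expSeries_div_hasSum_exp m).mul_left (Real.exp (-m))
  have h2 : Real.exp (-m) * NormedSpace.exp m = 1 := by
    rw [← Real.exp_eq_exp_ℝ, ← Real.exp_add]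
    simp
  rw [h2] at h
  convert h using 2 with i
  exacts [rfl, by ring]

lemma poisson_term_pos (m : ℝ) (hm : 0 < m) (i : ℕ) :
    0 < Real.exp (-m) * m ^ i / Nat.factorial i := by
  positivity

lemma poissonCDF_pos (m : ℝ) (hm : 0 < m) (x : ℕ) : 0 < poissonCDF m (x : ℤ) := by
  rw [poissonCDF_natCast_s17]
  exact Finset.sum_pos (fun i _ => poisson_term_pos m hm i) (by simp)

lemma poissonCDF_mono (m : ℝ) (hm : 0 < m) {x y : ℕ} (hxy : x ≤ y) :
    poissonCDF m (x : ℤ) ≤ poissonCDF m (y : ℤ) := by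
  rw [poissonCDF_natCast_s17, poissonCDF_natCast_s17]
  exact Finset.sum_le_sum_of_subset_of_nonneg
    (Finset.range_subset_range.2 (by omega))
    (fun i _ _ => (poisson_term_pos m hm i).le)

lemma poissonCDF_lt_one (m : ℝ) (hm : 0 < m) (x : ℕ) : poissonCDF m (x : ℤ) < 1 := by
  rw [poissonCDF_natCast_s17]
  have hsum := poisson_hasSum m
  calc ∑ i ∈ Finset.range (x + 1), Real.exp (-m) * m ^ i / Nat.factorial i
      < ∑ i ∈ Finset.range (x + 2), Real.exp (-m) * m ^ i / Nat.factorial i := by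
        rw [Finset.sum_range_succ (n := x + 1)]
        have := poisson_term_pos m hm (x + 1)
        linarith
    _ ≤ 1 := by
        have := hsum.summable.sum_le_tsum (Finset.range (x + 2))
          (fun i _ => (poisson_term_pos m hm i).le)
        rwa [hsum.tsum_eq] at this

lemma poissonQuantile_le_iff (m : ℝ) (hm : 0 < m) {u : ℝ} (hu1 : u < 1) (x : ℕ) :
    poissonQuantile m u ≤ x ↔ u ≤ poissonCDF m (x : ℤ) := by
  have hne : {k : ℕ | u ≤ poissonCDF m k}.Nonempty := by
    have htend := (poisson_hasSum m).tendsto_sum_nat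
    have := htend.eventually (eventually_gt_nhds hu1)
    obtain ⟨n, hn⟩ := this.exists
    refine ⟨n, ?_⟩
    have : (∑ i ∈ Finset.range n, Real.exp (-m) * m ^ i / Nat.factorial i)
        ≤ poissonCDF m (n : ℤ) := by
      rw [poissonCDF_natCast_s17]
      exact Finset.sum_le_sum_of_subset_of_nonneg
        (Finset.range_subset_range.2 (by omega))
        (fun i _ _ => (poisson_term_pos m hm i).le)
    simp only [Set.mem_setOf_eq]
    linarith
  constructor
  · intro h
    have hmem := Nat.sInf_mem hne
    exact le_trans hmem (poissonCDF_mono m hm h)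
  · intro h
    exact Nat.sInf_le h

/-- At full comonotonic shock strength (`θ = 1`), the bivariate zero-inflated Poisson model
`(X₁, X₂) = (W G_{λ₁}⁻¹(U), W G_{λ₂}⁻¹(U))`, with `W ~ Bernoulli(1-φ)` independent of
`U ~ Uniform(0,1)`, has joint CDF
`P(X₁ ≤ x₁, X₂ ≤ x₂) = φ + (1-φ) min{G_{λ₁}(x₁), G_{λ₂}(x₂)} = min{P(X₁ ≤ x₁), P(X₂ ≤ x₂)}`,
the Fréchet–Hoeffding upper bound for zero-inflated Poisson margins with common inflation
rate `φ`. -/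
theorem stmt_17 {Ω : Type*} [MeasurableSpace Ω] (μ : Measure Ω) [IsProbabilityMeasure μ]
    (lam₁ lam₂ φ : ℝ) (hlam₁ : 0 < lam₁) (hlam₂ : 0 < lam₂) (hφ : φ ∈ Set.Ioo (0 : ℝ) 1)
    (W : Ω → ℕ) (U : Ω → ℝ) (hWm : Measurable W) (hUm : Measurable U)
    (hW01 : ∀ ω, W ω = 0 ∨ W ω = 1)
    (hW1 : μ {ω | W ω = 1} = ENNReal.ofReal (1 - φ))
    (hU : Measure.map U μ = volume.restrict (Set.Ioo (0 : ℝ) 1))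
    (hind : IndepFun W U μ) :
    ∀ x₁ x₂ : ℕ,
      μ {ω | W ω * poissonQuantile lam₁ (U ω) ≤ x₁ ∧ W ω * poissonQuantile lam₂ (U ω) ≤ x₂}
        = ENNReal.ofReal (φ + (1 - φ) * min (poissonCDF lam₁ x₁) (poissonCDF lam₂ x₂)) ∧
      μ {ω | W ω * poissonQuantile lam₁ (U ω) ≤ x₁ ∧ W ω * poissonQuantile lam₂ (U ω) ≤ x₂}
        = min (μ {ω | W ω * poissonQuantile lam₁ (U ω) ≤ x₁})
            (μ {ω | W ω * poissonQuantile lam₂ (U ω) ≤ x₂}) := by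
  obtain ⟨hφ0, hφ1⟩ := hφ
  -- measurability of basic events
  have hWset : MeasurableSet {ω | W ω = 1} := hWm (measurableSet_singleton 1)
  -- U lands in (0,1) a.e.
  have hUae : ∀ᵐ ω ∂μ, U ω ∈ Set.Ioo (0 : ℝ) 1 := by
    have hpre : μ (U ⁻¹' Set.Ioo (0 : ℝ) 1) = 1 := by
      rw [← Measure.map_apply hUm measurableSet_Ioo, hU,
        Measure.restrict_apply measurableSet_Ioo]
      simp
    rw [ae_iff]
    have : {ω | ¬ U ω ∈ Set.Ioo (0 : ℝ) 1} = (U ⁻¹' Set.Ioo (0 : ℝ) 1)ᶜ := rfl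
    rw [this, measure_compl (hUm measurableSet_Ioo) (measure_ne_top μ _), hpre,
      measure_univ, tsub_self]
  -- measure of {U ≤ t} for t ∈ (0,1)
  have hUt : ∀ t : ℝ, 0 < t → t < 1 → μ (U ⁻¹' Set.Iic t) = ENNReal.ofReal t := by
    intro t ht0 ht1
    rw [← Measure.map_apply hUm measurableSet_Iic, hU,
      Measure.restrict_apply measurableSet_Iic]
    have : Set.Iic t ∩ Set.Ioo (0 : ℝ) 1 = Set.Ioc 0 t := by
      ext y
      simp only [Set.mem_inter_iff, Set.mem_Iic, Set.mem_Ioo, Set.mem_Ioc]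
      constructor
      · rintro ⟨h1, h2, h3⟩; exact ⟨h2, h1⟩
      · rintro ⟨h1, h2⟩; exact ⟨h2, h1, lt_of_le_of_lt h2 ht1⟩
    rw [this, Real.volume_Ioc]
    norm_num
  -- {W = 0} is the complement of {W = 1}
  have hW0set : {ω | W ω = 0} = {ω | W ω = 1}ᶜ := by
    ext ω
    simp only [Set.mem_setOf_eq, Set.mem_compl_iff]
    rcases hW01 ω with h | h <;> simp [h]
  have hW0 : μ {ω | W ω = 0} = ENNReal.ofReal φ := by
    rw [hW0set, measure_compl hWset (measure_ne_top μ _), measure_univ, hW1]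
    rw [← ENNReal.ofReal_one, ← ENNReal.ofReal_sub _ (by linarith : (0:ℝ) ≤ 1 - φ)]
    norm_num
  -- the key measure computation
  have key : ∀ t : ℝ, 0 < t → t < 1 →
      μ {ω | W ω = 0 ∨ U ω ≤ t} = ENNReal.ofReal (φ + (1 - φ) * t) := by
    intro t ht0 ht1
    have hsets : {ω | W ω = 0 ∨ U ω ≤ t}
        = {ω | W ω = 0} ∪ ({ω | W ω = 1} ∩ U ⁻¹' Set.Iic t) := by
      ext ω
      simp only [Set.mem_setOf_eq, Set.mem_union, Set.mem_inter_iff, Set.mem_preimage,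
        Set.mem_Iic]
      rcases hW01 ω with h | h <;> simp [h]
    have hdisj : Disjoint {ω | W ω = 0} ({ω | W ω = 1} ∩ U ⁻¹' Set.Iic t) := by
      refine Set.disjoint_left.2 fun ω h0 h1 => ?_
      have := h1.1
      simp only [Set.mem_setOf_eq] at h0 this
      omega
    have hmeas2 : MeasurableSet ({ω | W ω = 1} ∩ U ⁻¹' Set.Iic t) :=
      hWset.inter (hUm measurableSet_Iic)
    rw [hsets, measure_union hdisj hmeas2, hW0]
    have hW1' : ({ω | W ω = 1} : Set Ω) = W ⁻¹' {1} := rfl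
    have hind' := hind.measure_inter_preimage_eq_mul {1} (Set.Iic t)
      (measurableSet_singleton 1) measurableSet_Iic
    rw [hW1'] at hW1 ⊢
    rw [hind', hW1, hUt t ht0 ht1,
      ← ENNReal.ofReal_mul (by linarith : (0:ℝ) ≤ 1 - φ),
      ← ENNReal.ofReal_add (le_of_lt hφ0) (by nlinarith : (0:ℝ) ≤ (1 - φ) * t)]
  intro x₁ x₂
  set g₁ := poissonCDF lam₁ (x₁ : ℤ) with hg₁
  set g₂ := poissonCDF lam₂ (x₂ : ℤ) with hg₂
  have hg₁0 : 0 < g₁ := poissonCDF_pos lam₁ hlam₁ x₁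
  have hg₂0 : 0 < g₂ := poissonCDF_pos lam₂ hlam₂ x₂
  have hg₁1 : g₁ < 1 := poissonCDF_lt_one lam₁ hlam₁ x₁
  have hg₂1 : g₂ < 1 := poissonCDF_lt_one lam₂ hlam₂ x₂
  -- a.e. set identifications
  have hjoint : μ {ω | W ω * poissonQuantile lam₁ (U ω) ≤ x₁ ∧
      W ω * poissonQuantile lam₂ (U ω) ≤ x₂}
      = ENNReal.ofReal (φ + (1 - φ) * min g₁ g₂) := by
    rw [measure_congr (Filter.eventuallyEq_set.2 (hUae.mono fun ω hω => ?_)),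
      key (min g₁ g₂) (lt_min hg₁0 hg₂0) (min_lt_iff.2 (Or.inl hg₁1))]
    show (W ω * poissonQuantile lam₁ (U ω) ≤ x₁ ∧ W ω * poissonQuantile lam₂ (U ω) ≤ x₂)
      ↔ (W ω = 0 ∨ U ω ≤ min g₁ g₂)
    rcases hW01 ω with h | h
    · simp [h]
    · simp only [h, one_mul, Nat.one_ne_zero, false_or,
        poissonQuantile_le_iff lam₁ hlam₁ hω.2, poissonQuantile_le_iff lam₂ hlam₂ hω.2,
        le_min_iff, ← hg₁, ← hg₂]
  have hmarg : ∀ (lam : ℝ), 0 < lam → ∀ (x : ℕ),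
      0 < poissonCDF lam (x : ℤ) → poissonCDF lam (x : ℤ) < 1 →
      μ {ω | W ω * poissonQuantile lam (U ω) ≤ x}
        = ENNReal.ofReal (φ + (1 - φ) * poissonCDF lam (x : ℤ)) := by
    intro lam hlam x hg0 hg1
    rw [measure_congr (Filter.eventuallyEq_set.2 (hUae.mono fun ω hω => ?_)),
      key _ hg0 hg1]
    show (W ω * poissonQuantile lam (U ω) ≤ x) ↔ (W ω = 0 ∨ U ω ≤ poissonCDF lam (x : ℤ))
    rcases hW01 ω with h | h
    · simp [h]
    · simp [h, poissonQuantile_le_iff lam hlam hω.2]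
  have hm₁ := hmarg lam₁ hlam₁ x₁ hg₁0 hg₁1
  have hm₂ := hmarg lam₂ hlam₂ x₂ hg₂0 hg₂1
  refine ⟨hjoint, ?_⟩
  rw [hjoint, hm₁, hm₂]
  rcases le_total g₁ g₂ with h | h
  · rw [min_eq_left h, min_eq_left]
    exact ENNReal.ofReal_le_ofReal (by nlinarith)
  · rw [min_eq_right h, min_eq_right]
    exact ENNReal.ofReal_le_ofReal (by nlinarith)
end
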